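/- arXiv:1403.0268 — 8 statements merged into one kernel-verified Lean document; each statement's English description precedes it below -/
import Mathlib

section
/- Let p ∈ (ℝ∪{−∞})ⁿ be a nonzero vector (at least one entry is real), q ∈ ℝⁿ a regular vector, and set Δ = max_{1≤i≤n}(p_i − q_i) (a real number). A regular vector x ∈ ℝⁿ satisfies f(x) = Δ if and only if there exists α ∈ ℝ such that for every i: p_i + α ≤ x_i ≤ α + Δ + q_i. -/
/-!
Max-plus semifield modeled as `WithBot ℝ` (= ℝ ∪ {−∞}).
`obj p q x` is the objective q⁻⊗x⊗x⁻⊗p = (max_i (x_i − q_i)) + (max_j (p_j − x_j)).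
-/

/-- The objective function f(x) = (max_i (x_i − q_i)) + (max_j (p_j − x_j)). -/
noncomputable def obj {n : ℕ} (p : Fin n → WithBot ℝ) (q : Fin n → ℝ)
    (x : Fin n → ℝ) : WithBot ℝ :=
  (Finset.univ.sup fun i => ((x i - q i : ℝ) : WithBot ℝ)) +
    (Finset.univ.sup fun j => p j + ((-(x j) : ℝ) : WithBot ℝ))

/-- A regular vector x attains the minimum value Δ = max_i (p_i − q_i) of f iff
there is α ∈ ℝ with p_i + α ≤ x_i ≤ α + Δ + q_i for all i. -/
theorem stmt_1 {n : ℕ} (p : Fin n → WithBot ℝ) (q : Fin n → ℝ)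
    (hp : ∃ i, p i ≠ ⊥) (Δ : ℝ)
    (hΔ : (Δ : WithBot ℝ) = Finset.univ.sup fun i => p i + ((-(q i) : ℝ) : WithBot ℝ))
    (x : Fin n → ℝ) :
    obj p q x = (Δ : WithBot ℝ) ↔
      ∃ α : ℝ, ∀ i,
        p i + ((α : ℝ) : WithBot ℝ) ≤ ((x i : ℝ) : WithBot ℝ) ∧
        x i ≤ α + Δ + q i := by
  obtain ⟨i0, hi0⟩ := hp
  set A := Finset.univ.sup fun i => ((x i - q i : ℝ) : WithBot ℝ) with hA
  set B := Finset.univ.sup fun j => p j + ((-(x j) : ℝ) : WithBot ℝ) with hB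
  have hAne : A ≠ ⊥ := by
    intro h
    have h1 := Finset.le_sup (f := fun i => ((x i - q i : ℝ) : WithBot ℝ))
      (Finset.mem_univ i0)
    rw [← hA, h] at h1
    exact absurd h1 (by simp)
  obtain ⟨a, ha⟩ := WithBot.ne_bot_iff_exists.mp hAne
  have hBne : B ≠ ⊥ := by
    obtain ⟨r, hr⟩ := WithBot.ne_bot_iff_exists.mp hi0
    intro h
    have h1 := Finset.le_sup (f := fun j => p j + ((-(x j) : ℝ) : WithBot ℝ))
      (Finset.mem_univ i0)
    rw [← hB, h, ← hr, ← WithBot.coe_add] at h1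
    exact absurd h1 (by simp)
  obtain ⟨b, hb⟩ := WithBot.ne_bot_iff_exists.mp hBne
  -- basic bounds
  have hAle : ∀ i, x i - q i ≤ a := by
    intro i
    have h1 := Finset.le_sup (f := fun i => ((x i - q i : ℝ) : WithBot ℝ))
      (Finset.mem_univ i)
    rw [← hA, ← ha] at h1
    exact_mod_cast h1
  have hBle : ∀ j, p j + ((-(x j) : ℝ) : WithBot ℝ) ≤ (b : WithBot ℝ) := by
    intro j
    have h1 := Finset.le_sup (f := fun j => p j + ((-(x j) : ℝ) : WithBot ℝ))
      (Finset.mem_univ j)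
    rw [← hB, ← hb] at h1
    exact h1
  -- lower bound: Δ ≤ a + b
  have hlow : Δ ≤ a + b := by
    have h1 : (Δ : WithBot ℝ) ≤ ((a + b : ℝ) : WithBot ℝ) := by
      rw [hΔ]
      apply Finset.sup_le
      intro i _
      rcases eq_or_ne (p i) ⊥ with h | h
      · simp [h]
      · obtain ⟨r, hr⟩ := WithBot.ne_bot_iff_exists.mp h
        rw [← hr, ← WithBot.coe_add, WithBot.coe_le_coe]
        have h2 : r + -(x i) ≤ b := by
          have := hBle i
          rw [← hr, ← WithBot.coe_add, WithBot.coe_le_coe] at this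
          exact this
        have h3 := hAle i
        linarith
    exact_mod_cast h1
  have hobj : obj p q x = ((a + b : ℝ) : WithBot ℝ) := by
    rw [obj, ← hA, ← hB, ← ha, ← hb, WithBot.coe_add]
  constructor
  · intro h
    rw [hobj] at h
    have hab : a + b = Δ := by exact_mod_cast h
    refine ⟨-b, fun i => ?_⟩
    constructor
    · rcases eq_or_ne (p i) ⊥ with h' | h'
      · simp [h']
      · obtain ⟨r, hr⟩ := WithBot.ne_bot_iff_exists.mp h'
        rw [← hr, ← WithBot.coe_add, WithBot.coe_le_coe]
        have h2 : r + -(x i) ≤ b := by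
          have := hBle i
          rw [← hr, ← WithBot.coe_add, WithBot.coe_le_coe] at this
          exact this
        linarith
    · have h3 := hAle i
      linarith
  · rintro ⟨α, hα⟩
    rw [hobj]
    have hale : a ≤ α + Δ := by
      have h1 : A ≤ ((α + Δ : ℝ) : WithBot ℝ) := by
        rw [hA]
        apply Finset.sup_le
        intro i _
        rw [WithBot.coe_le_coe]
        have := (hα i).2
        linarith
      rw [← ha, WithBot.coe_le_coe] at h1
      exact h1
    have hble : b ≤ -α := by
      have h1 : B ≤ ((-α : ℝ) : WithBot ℝ) := by
        rw [hB]
        apply Finset.sup_le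
        intro j _
        rcases eq_or_ne (p j) ⊥ with h' | h'
        · simp [h']
        · obtain ⟨r, hr⟩ := WithBot.ne_bot_iff_exists.mp h'
          rw [← hr, ← WithBot.coe_add, WithBot.coe_le_coe]
          have h2 := (hα j).1
          rw [← hr, ← WithBot.coe_add, WithBot.coe_le_coe] at h2
          linarith
      rw [← hb, WithBot.coe_le_coe] at h1
      exact h1
    have : a + b = Δ := le_antisymm (by linarith) hlow
    exact_mod_cast this
end

section
/- Let p ∈ (ℝ∪{−∞})ⁿ be a nonzero vector (at least one entry is real), q ∈ ℝⁿ a regular vector, and set Δ = max_{1≤i≤n}(p_i − q_i) (a real number). A regular vector x ∈ ℝⁿ satisfies f(x) = Δ if and only if there exists u ∈ ℝⁿ such that for every i: x_i = max( u_i , p_i − Δ + max_{1≤j≤n}(u_j − q_j) ), where the second term is −∞ when p_i = −∞. -/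
/-- A regular vector x attains the minimum value Δ = max_i (p_i − q_i) of f iff
there is u ∈ ℝⁿ with x_i = max(u_i, p_i − Δ + max_j (u_j − q_j)) for all i
(the Kleene-star form x = (I ⊕ Δ⁻¹pq⁻)u). -/
theorem stmt_2 {n : ℕ} (p : Fin n → WithBot ℝ) (q : Fin n → ℝ)
    (hp : ∃ i, p i ≠ ⊥) (Δ : ℝ)
    (hΔ : (Δ : WithBot ℝ) = Finset.univ.sup fun i => p i + ((-(q i) : ℝ) : WithBot ℝ))
    (x : Fin n → ℝ) :
    obj p q x = (Δ : WithBot ℝ) ↔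
      ∃ u : Fin n → ℝ, ∀ i,
        ((x i : ℝ) : WithBot ℝ) =
          ((u i : ℝ) : WithBot ℝ) ⊔
            (p i + ((-Δ : ℝ) : WithBot ℝ) +
              Finset.univ.sup fun j => ((u j - q j : ℝ) : WithBot ℝ)) := by
  classical
  obtain ⟨i₀, hp₀⟩ := hp
  have hne : (Finset.univ : Finset (Fin n)).Nonempty := ⟨i₀, Finset.mem_univ _⟩
  have hΔi : ∀ i (c : ℝ), p i = (c : WithBot ℝ) → c - q i ≤ Δ := by
    intro i c hc
    have h := Finset.le_sup (f := fun j => p j + ((-(q j) : ℝ) : WithBot ℝ))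
      (Finset.mem_univ i)
    rw [← hΔ] at h
    simp only [hc, ← WithBot.coe_add, WithBot.coe_le_coe] at h
    linarith
  constructor
  · intro h
    refine ⟨x, fun i => ?_⟩
    have hA : (Finset.univ.sup fun j => ((x j - q j : ℝ) : WithBot ℝ))
        = ((Finset.univ.sup' hne fun j => x j - q j : ℝ) : WithBot ℝ) :=
      (Finset.coe_sup' hne _).symm
    set a : ℝ := Finset.univ.sup' hne fun j => x j - q j with hsa
    rw [hA]
    symm
    rw [sup_eq_left]
    cases hpi : p i with
    | bot => simp
    | coe c =>
      have hB : ((c + -(x i) : ℝ) : WithBot ℝ) ≤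
          Finset.univ.sup fun j => p j + ((-(x j) : ℝ) : WithBot ℝ) := by
        have h2 := Finset.le_sup (f := fun j => p j + ((-(x j) : ℝ) : WithBot ℝ))
          (Finset.mem_univ i)
        simp only [hpi, ← WithBot.coe_add] at h2
        exact h2
      have h1 : ((a + (c + -(x i)) : ℝ) : WithBot ℝ) ≤ (Δ : WithBot ℝ) := by
        rw [← h]
        unfold obj
        rw [hA, WithBot.coe_add]
        exact add_le_add (le_refl _) hB
      rw [WithBot.coe_le_coe] at h1
      calc (c : WithBot ℝ) + ((-Δ : ℝ) : WithBot ℝ) + (a : WithBot ℝ)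
          = ((c + -Δ + a : ℝ) : WithBot ℝ) := by rw [← WithBot.coe_add, ← WithBot.coe_add]
        _ ≤ ((x i : ℝ) : WithBot ℝ) := WithBot.coe_le_coe.mpr (by linarith)
  · rintro ⟨u, hu⟩
    have hS : (Finset.univ.sup fun j => ((u j - q j : ℝ) : WithBot ℝ))
        = ((Finset.univ.sup' hne fun j => u j - q j : ℝ) : WithBot ℝ) :=
      (Finset.coe_sup' hne _).symm
    set s : ℝ := Finset.univ.sup' hne fun j => u j - q j with hss
    have hx : ∀ i, (p i = ⊥ ∧ x i = u i) ∨
        ∃ c : ℝ, p i = (c : WithBot ℝ) ∧ x i = max (u i) (c + -Δ + s) := by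
      intro i
      have h := hu i
      rw [hS] at h
      cases hpi : p i with
      | bot =>
        left
        refine ⟨rfl, ?_⟩
        rw [hpi] at h
        simp at h
        exact_mod_cast h
      | coe c =>
        right
        refine ⟨c, rfl, ?_⟩
        rw [hpi, ← WithBot.coe_add, ← WithBot.coe_add, ← WithBot.coe_sup] at h
        exact_mod_cast h
    have hge : (Δ : WithBot ℝ) ≤ obj p q x := by
      rw [hΔ]
      apply Finset.sup_le
      intro i _
      have h1 : ((x i - q i : ℝ) : WithBot ℝ) ≤
          Finset.univ.sup fun j => ((x j - q j : ℝ) : WithBot ℝ) :=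
        Finset.le_sup (f := fun j => ((x j - q j : ℝ) : WithBot ℝ)) (Finset.mem_univ i)
      have h2 : p i + ((-(x i) : ℝ) : WithBot ℝ) ≤
          Finset.univ.sup fun j => p j + ((-(x j) : ℝ) : WithBot ℝ) :=
        Finset.le_sup (f := fun j => p j + ((-(x j) : ℝ) : WithBot ℝ)) (Finset.mem_univ i)
      have key : p i + ((-(q i) : ℝ) : WithBot ℝ)
          = ((x i - q i : ℝ) : WithBot ℝ) + (p i + ((-(x i) : ℝ) : WithBot ℝ)) := by
        cases p i with
        | bot => simp
        | coe c =>
          rw [← WithBot.coe_add, ← WithBot.coe_add, ← WithBot.coe_add, WithBot.coe_inj]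
          ring
      rw [key]
      exact add_le_add h1 h2
    have hA : (Finset.univ.sup fun i => ((x i - q i : ℝ) : WithBot ℝ)) ≤ (s : WithBot ℝ) := by
      apply Finset.sup_le
      intro i _
      rw [WithBot.coe_le_coe]
      have h1 : u i - q i ≤ s := Finset.le_sup' (fun j => u j - q j) (Finset.mem_univ i)
      rcases hx i with ⟨_, h⟩ | ⟨c, hc, h⟩
      · rw [h]; exact h1
      · have h2 : c - q i ≤ Δ := hΔi i c hc
        rw [h, sub_le_iff_le_add, max_le_iff]
        constructor <;> linarith
    have hB : (Finset.univ.sup fun j => p j + ((-(x j) : ℝ) : WithBot ℝ))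
        ≤ ((Δ - s : ℝ) : WithBot ℝ) := by
      apply Finset.sup_le
      intro j _
      rcases hx j with ⟨hb, _⟩ | ⟨c, hc, h⟩
      · rw [hb]; simp
      · rw [hc, ← WithBot.coe_add, WithBot.coe_le_coe]
        have : c + -Δ + s ≤ x j := by rw [h]; exact le_max_right _ _
        linarith
    refine le_antisymm ?_ hge
    calc obj p q x ≤ (s : WithBot ℝ) + ((Δ - s : ℝ) : WithBot ℝ) := add_le_add hA hB
      _ = (Δ : WithBot ℝ) := by rw [← WithBot.coe_add]; norm_num
end

section
/- Let p ∈ (ℝ∪{−∞})ⁿ be a nonzero vector (at least one entry is real), q ∈ ℝⁿ a regular vector, and Δ = max_{1≤i≤n}(p_i − q_i) (a real number). Then for a regular vector x ∈ ℝⁿ the following two conditions are equivalent: (1) there exists α ∈ ℝ with p_i + α ≤ x_i ≤ α + Δ + q_i for all i; (2) there exists u ∈ ℝⁿ with x_i = max( u_i , p_i − Δ + max_{1≤j≤n}(u_j − q_j) ) for all i. -/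
/-!
Max-plus semifield modeled as `WithBot ℝ` (= ℝ ∪ {−∞}); `⊔` is max-plus addition.
Equivalence of the double-inequality form αp ≤ x ≤ αΔq and the Kleene-star form
x = (I ⊕ Δ⁻¹pq⁻)u for the solution set of the unconstrained problem.
-/

theorem stmt_3 {n : ℕ} (p : Fin n → WithBot ℝ) (q : Fin n → ℝ)
    (hp : ∃ i, p i ≠ ⊥) (Δ : ℝ)
    (hΔ : (Δ : WithBot ℝ) = Finset.univ.sup fun i => p i + ((-(q i) : ℝ) : WithBot ℝ))
    (x : Fin n → ℝ) :
    (∃ α : ℝ, ∀ i,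
        p i + ((α : ℝ) : WithBot ℝ) ≤ ((x i : ℝ) : WithBot ℝ) ∧
        x i ≤ α + Δ + q i) ↔
      (∃ u : Fin n → ℝ, ∀ i,
        ((x i : ℝ) : WithBot ℝ) =
          ((u i : ℝ) : WithBot ℝ) ⊔
            (p i + ((-Δ : ℝ) : WithBot ℝ) +
              Finset.univ.sup fun j => ((u j - q j : ℝ) : WithBot ℝ))) := by
  obtain ⟨i0, hi0⟩ := hp
  have hn : (Finset.univ : Finset (Fin n)).Nonempty := ⟨i0, Finset.mem_univ _⟩
  constructor
  · rintro ⟨α, hα⟩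
    refine ⟨x, fun i => ?_⟩
    have hS : (Finset.univ.sup fun j => ((x j - q j : ℝ) : WithBot ℝ)) ≤
        ((α + Δ : ℝ) : WithBot ℝ) := by
      refine Finset.sup_le fun j _ => ?_
      exact WithBot.coe_le_coe.mpr (by linarith [(hα j).2])
    have h2 : p i + ((-Δ : ℝ) : WithBot ℝ) +
        (Finset.univ.sup fun j => ((x j - q j : ℝ) : WithBot ℝ)) ≤ ((x i : ℝ) : WithBot ℝ) := by
      calc p i + ((-Δ : ℝ) : WithBot ℝ) + _
          ≤ p i + ((-Δ : ℝ) : WithBot ℝ) + ((α + Δ : ℝ) : WithBot ℝ) := add_le_add_right hS _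
        _ = p i + ((α : ℝ) : WithBot ℝ) := by
            rw [add_assoc, ← WithBot.coe_add]
            congr 2
            ring
        _ ≤ _ := (hα i).1
    exact (sup_eq_left.mpr h2).symm
  · rintro ⟨u, hu⟩
    set M : ℝ := Finset.univ.sup' hn (fun j => u j - q j) with hM
    have hSM : (Finset.univ.sup fun j => ((u j - q j : ℝ) : WithBot ℝ)) = ((M : ℝ) : WithBot ℝ) :=
      (Finset.coe_sup' hn fun j => u j - q j).symm
    refine ⟨M - Δ, fun i => ⟨?_, ?_⟩⟩
    · have h1 : p i + ((-Δ : ℝ) : WithBot ℝ) + ((M : ℝ) : WithBot ℝ) ≤ ((x i : ℝ) : WithBot ℝ) := by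
        rw [hu i, hSM]; exact le_sup_right
      have hc : ((M - Δ : ℝ) : WithBot ℝ) = ((-Δ : ℝ) : WithBot ℝ) + ((M : ℝ) : WithBot ℝ) := by
        rw [← WithBot.coe_add]; congr 1; ring
      rw [hc, ← add_assoc]; exact h1
    · have hpΔ : p i ≤ ((Δ : ℝ) : WithBot ℝ) + ((q i : ℝ) : WithBot ℝ) := by
        have hle : p i + ((-(q i) : ℝ) : WithBot ℝ) ≤ ((Δ : ℝ) : WithBot ℝ) := by
          rw [hΔ]; exact Finset.le_sup (f := fun i => p i + ((-(q i) : ℝ) : WithBot ℝ)) (Finset.mem_univ i)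
        have := add_le_add_left hle (((q i : ℝ) : WithBot ℝ))
        rwa [add_assoc, ← WithBot.coe_add, neg_add_cancel, WithBot.coe_zero, add_zero] at this
      have hx : ((x i : ℝ) : WithBot ℝ) ≤ ((M + q i : ℝ) : WithBot ℝ) := by
        rw [hu i, hSM]
        refine sup_le ?_ ?_
        · exact WithBot.coe_le_coe.mpr (by
            have := Finset.le_sup' (fun j => u j - q j) (Finset.mem_univ i)
            rw [← hM] at this
            linarith)
        · calc p i + ((-Δ : ℝ) : WithBot ℝ) + ((M : ℝ) : WithBot ℝ)
              ≤ (((Δ : ℝ) : WithBot ℝ) + ((q i : ℝ) : WithBot ℝ)) + ((-Δ : ℝ) : WithBot ℝ) +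
                ((M : ℝ) : WithBot ℝ) := by
                exact add_le_add_left (add_le_add_left hpΔ _) _
            _ = ((M + q i : ℝ) : WithBot ℝ) := by
                rw [← WithBot.coe_add, ← WithBot.coe_add, ← WithBot.coe_add]
                congr 1; ring
      have := WithBot.coe_le_coe.mp hx
      linarith
end

section
/- Let p ∈ (ℝ∪{−∞})ⁿ be nonzero (some entry real), q ∈ ℝⁿ regular, h ∈ ℝⁿ regular, and g ∈ (ℝ∪{−∞})ⁿ with g_i ≤ h_i for all i. Then the minimum over all regular x ∈ ℝⁿ satisfying g_i ≤ x_i ≤ h_i for all i of f(x) = (max_{1≤i≤n}(x_i − q_i)) + (max_{1≤j≤n}(p_j − x_j)) equals θ = max( max_{1≤i≤n}(p_i − q_i) , (max_{1≤i≤n}(g_i − q_i)) + (max_{1≤j≤n}(p_j − h_j)) ), and this minimum is attained by some feasible x. -/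
/-- Boundary-constrained problem: the minimum of f over regular x with g ≤ x ≤ h equals
θ = max( max_i (p_i − q_i), (max_i (g_i − q_i)) + (max_j (p_j − h_j)) ), a real number,
and it is attained by some feasible x. -/
theorem stmt_4 {n : ℕ} (p : Fin n → WithBot ℝ) (q : Fin n → ℝ)
    (g : Fin n → WithBot ℝ) (h : Fin n → ℝ)
    (hp : ∃ i, p i ≠ ⊥) (hgh : ∀ i, g i ≤ ((h i : ℝ) : WithBot ℝ)) :
    ∃ θ : ℝ,
      ((θ : WithBot ℝ) =
        (Finset.univ.sup fun i => p i + ((-(q i) : ℝ) : WithBot ℝ)) ⊔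
          ((Finset.univ.sup fun i => g i + ((-(q i) : ℝ) : WithBot ℝ)) +
            (Finset.univ.sup fun j => p j + ((-(h j) : ℝ) : WithBot ℝ)))) ∧
      IsLeast
        {v | ∃ x : Fin n → ℝ,
          (∀ i, g i ≤ ((x i : ℝ) : WithBot ℝ) ∧ x i ≤ h i) ∧ obj p q x = v}
        (θ : WithBot ℝ) := by
  classical
  obtain ⟨i0, hi0⟩ := hp
  obtain ⟨p0, hp0⟩ := WithBot.ne_bot_iff_exists.mp hi0
  set A := (Finset.univ.sup fun i => p i + ((-(q i) : ℝ) : WithBot ℝ)) with hA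
  set B := (Finset.univ.sup fun i => g i + ((-(q i) : ℝ) : WithBot ℝ)) with hB
  set C := (Finset.univ.sup fun j => p j + ((-(h j) : ℝ) : WithBot ℝ)) with hC
  have hAb : A ≠ ⊥ := by
    intro hbot
    have h1 : p i0 + ((-(q i0) : ℝ) : WithBot ℝ) ≤ A :=
      Finset.le_sup (f := fun i => p i + ((-(q i) : ℝ) : WithBot ℝ)) (Finset.mem_univ i0)
    rw [hbot, le_bot_iff, ← hp0, ← WithBot.coe_add] at h1
    exact WithBot.coe_ne_bot h1
  have hCb : C ≠ ⊥ := by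
    intro hbot
    have h1 : p i0 + ((-(h i0) : ℝ) : WithBot ℝ) ≤ C :=
      Finset.le_sup (f := fun j => p j + ((-(h j) : ℝ) : WithBot ℝ)) (Finset.mem_univ i0)
    rw [hbot, le_bot_iff, ← hp0, ← WithBot.coe_add] at h1
    exact WithBot.coe_ne_bot h1
  obtain ⟨a, ha⟩ := WithBot.ne_bot_iff_exists.mp hAb
  obtain ⟨c, hc⟩ := WithBot.ne_bot_iff_exists.mp hCb
  set tW : WithBot ℝ := ((a - c : ℝ) : WithBot ℝ) ⊔ B with htW
  have htWb : tW ≠ ⊥ := by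
    intro hbot
    have : ((a - c : ℝ) : WithBot ℝ) ≤ tW := le_sup_left
    rw [hbot, le_bot_iff] at this
    exact WithBot.coe_ne_bot this
  obtain ⟨t, ht⟩ := WithBot.ne_bot_iff_exists.mp htWb
  -- the candidate optimum
  set x : Fin n → ℝ := fun j => min (h j) (q j + t) with hx
  -- key: ↑(t + c) = A ⊔ (B + C)
  have hBt : B ≤ (t : WithBot ℝ) := ht ▸ le_sup_right
  have hact : ((a - c : ℝ) : WithBot ℝ) ≤ (t : WithBot ℝ) := ht ▸ le_sup_left
  have hatc : a ≤ t + c := by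
    have := add_le_add_right hact ((c : ℝ) : WithBot ℝ)
    rw [← WithBot.coe_add, ← WithBot.coe_add] at this
    have := WithBot.coe_le_coe.mp this
    linarith
  have hθeq : ((t + c : ℝ) : WithBot ℝ) = A ⊔ (B + C) := by
    apply le_antisymm
    · rw [WithBot.coe_add, ht, hc]
      rcases le_total ((a - c : ℝ) : WithBot ℝ) B with hle | hle
      · have : tW = B := sup_eq_right.mpr hle
        rw [this, ← hc]
        exact le_sup_right
      · have h2 : tW = ((a - c : ℝ) : WithBot ℝ) := sup_eq_left.mpr hle
        rw [h2, ← hc, ← WithBot.coe_add]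
        have h3 : (a - c + c : ℝ) = a := by ring
        rw [h3, ha]
        exact le_sup_left
    · apply sup_le
      · rw [← ha]
        calc ((a : ℝ) : WithBot ℝ) = ((a - c + c : ℝ) : WithBot ℝ) := by rw [sub_add_cancel]
          _ = ((a - c : ℝ) : WithBot ℝ) + ((c : ℝ) : WithBot ℝ) := WithBot.coe_add _ _
          _ ≤ ((t : ℝ) : WithBot ℝ) + ((c : ℝ) : WithBot ℝ) := add_le_add_left hact _
          _ = ((t + c : ℝ) : WithBot ℝ) := (WithBot.coe_add _ _).symm
      · rw [← hc, WithBot.coe_add]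
        exact add_le_add_left hBt _
  -- lower bound for any feasible y
  have lowbd : ∀ y : Fin n → ℝ, (∀ i, g i ≤ ((y i : ℝ) : WithBot ℝ) ∧ y i ≤ h i) →
      A ⊔ (B + C) ≤ obj p q y := by
    intro y hy
    set S1 := (Finset.univ.sup fun i => ((y i - q i : ℝ) : WithBot ℝ)) with hS1
    set S2 := (Finset.univ.sup fun j => p j + ((-(y j) : ℝ) : WithBot ℝ)) with hS2
    have hobj : obj p q y = S1 + S2 := rfl
    rw [hobj]
    apply sup_le
    · apply Finset.sup_le
      intro i _
      have key : p i + ((-(q i) : ℝ) : WithBot ℝ) =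
          ((y i - q i : ℝ) : WithBot ℝ) + (p i + ((-(y i) : ℝ) : WithBot ℝ)) := by
        induction p i with
        | bot => simp
        | coe v =>
          rw [← WithBot.coe_add, ← WithBot.coe_add, ← WithBot.coe_add, WithBot.coe_inj]
          ring
      rw [key]
      exact add_le_add
        (Finset.le_sup (f := fun i => ((y i - q i : ℝ) : WithBot ℝ)) (Finset.mem_univ i))
        (Finset.le_sup (f := fun j => p j + ((-(y j) : ℝ) : WithBot ℝ)) (Finset.mem_univ i))
    · apply add_le_add
      · apply Finset.sup_le
        intro i _
        calc g i + ((-(q i) : ℝ) : WithBot ℝ)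
            ≤ ((y i : ℝ) : WithBot ℝ) + ((-(q i) : ℝ) : WithBot ℝ) :=
              add_le_add_left (hy i).1 _
          _ = ((y i - q i : ℝ) : WithBot ℝ) := by rw [← WithBot.coe_add, WithBot.coe_inj]; ring
          _ ≤ S1 := Finset.le_sup (f := fun i => ((y i - q i : ℝ) : WithBot ℝ)) (Finset.mem_univ i)
      · apply Finset.sup_le
        intro j _
        calc p j + ((-(h j) : ℝ) : WithBot ℝ)
            ≤ p j + ((-(y j) : ℝ) : WithBot ℝ) :=
              add_le_add_right (WithBot.coe_le_coe.mpr (neg_le_neg (hy j).2)) _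
          _ ≤ S2 := Finset.le_sup (f := fun j => p j + ((-(y j) : ℝ) : WithBot ℝ)) (Finset.mem_univ j)
  -- feasibility of x
  have hfeas : ∀ i, g i ≤ ((x i : ℝ) : WithBot ℝ) ∧ x i ≤ h i := by
    intro i
    constructor
    · rw [hx]
      simp only
      rw [WithBot.coe_min]
      apply le_min (hgh i)
      -- g i ≤ ↑(q i + t)
      have h1 : g i + ((-(q i) : ℝ) : WithBot ℝ) ≤ B :=
        Finset.le_sup (f := fun i => g i + ((-(q i) : ℝ) : WithBot ℝ)) (Finset.mem_univ i)
      have h2 : g i + ((-(q i) : ℝ) : WithBot ℝ) ≤ ((t : ℝ) : WithBot ℝ) := h1.trans hBt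
      have h3 := add_le_add_left h2 ((q i : ℝ) : WithBot ℝ)
      have h4 : g i + ((-(q i) : ℝ) : WithBot ℝ) + ((q i : ℝ) : WithBot ℝ) = g i := by
        rw [add_assoc, ← WithBot.coe_add]
        norm_num
      rw [h4, ← WithBot.coe_add] at h3
      have : (t + q i : ℝ) = q i + t := by ring
      rwa [this] at h3
    · exact min_le_left _ _
  -- obj x = θ
  have hobjx : obj p q x = ((t + c : ℝ) : WithBot ℝ) := by
    apply le_antisymm
    · have hS1 : (Finset.univ.sup fun i => ((x i - q i : ℝ) : WithBot ℝ)) ≤ ((t : ℝ) : WithBot ℝ) := by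
        apply Finset.sup_le
        intro i _
        apply WithBot.coe_le_coe.mpr
        have : x i ≤ q i + t := min_le_right _ _
        linarith
      have hS2 : (Finset.univ.sup fun j => p j + ((-(x j) : ℝ) : WithBot ℝ)) ≤ ((c : ℝ) : WithBot ℝ) := by
        apply Finset.sup_le
        intro j _
        rcases min_choice (h j) (q j + t) with hm | hm
        · have hxj : x j = h j := hm
          rw [hxj, hc]
          exact Finset.le_sup (f := fun j => p j + ((-(h j) : ℝ) : WithBot ℝ)) (Finset.mem_univ j)
        · have hxj : x j = q j + t := hm
          rw [hxj]
          have key : p j + ((-(q j + t) : ℝ) : WithBot ℝ) =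
              p j + ((-(q j) : ℝ) : WithBot ℝ) + ((-t : ℝ) : WithBot ℝ) := by
            have h5 : (-(q j + t) : ℝ) = -(q j) + -t := by ring
            rw [h5, WithBot.coe_add, add_assoc]
          rw [key]
          have h1 : p j + ((-(q j) : ℝ) : WithBot ℝ) + ((-t : ℝ) : WithBot ℝ) ≤
              A + ((-t : ℝ) : WithBot ℝ) :=
            add_le_add_left
              (Finset.le_sup (f := fun j => p j + ((-(q j) : ℝ) : WithBot ℝ))
                (Finset.mem_univ j)) _
          apply h1.trans
          rw [← ha, ← WithBot.coe_add]
          apply WithBot.coe_le_coe.mpr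
          linarith
      calc obj p q x ≤ ((t : ℝ) : WithBot ℝ) + ((c : ℝ) : WithBot ℝ) := add_le_add hS1 hS2
        _ = ((t + c : ℝ) : WithBot ℝ) := (WithBot.coe_add _ _).symm
    · rw [hθeq]
      exact lowbd x hfeas
  refine ⟨t + c, hθeq, ⟨⟨x, hfeas, hobjx⟩, ?_⟩⟩
  rintro v ⟨y, hyf, rfl⟩
  rw [hθeq]
  exact lowbd y hyf
end

section
/- Let p ∈ (ℝ∪{−∞})ⁿ be nonzero, q ∈ ℝⁿ regular, h ∈ ℝⁿ regular, g ∈ (ℝ∪{−∞})ⁿ with g_i ≤ h_i for all i, and let θ = max( max_i(p_i − q_i) , (max_i(g_i − q_i)) + (max_j(p_j − h_j)) ) (a real number). A regular vector x with g ≤ x ≤ h satisfies f(x) = θ if and only if there exists u ∈ ℝⁿ such that (a) x_i = max( u_i , p_i − θ + max_{1≤j≤n}(u_j − q_j) ) for all i, and (b) for every j: g_j ≤ u_j and u_j ≤ −max_{1≤i≤n}( M_{ij} − h_i ), where M_{ij} = max( [i = j]·0 (and −∞ if i ≠ j) , p_i − θ − q_j ). -/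
/-- Entry (i,j) of the matrix I ⊕ θ⁻¹pq⁻. -/
noncomputable def Mmat {n : ℕ} (p : Fin n → WithBot ℝ) (q : Fin n → ℝ) (θ : ℝ)
    (i j : Fin n) : WithBot ℝ :=
  (if i = j then (0 : WithBot ℝ) else ⊥) ⊔ (p i + ((-θ - q j : ℝ) : WithBot ℝ))

/-- Characterization of the solutions of the boundary-constrained problem. -/
theorem stmt_5 {n : ℕ} (p : Fin n → WithBot ℝ) (q : Fin n → ℝ)
    (g : Fin n → WithBot ℝ) (h : Fin n → ℝ)
    (hp : ∃ i, p i ≠ ⊥) (hgh : ∀ i, g i ≤ ((h i : ℝ) : WithBot ℝ))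
    (θ : ℝ)
    (hθ : (θ : WithBot ℝ) =
      (Finset.univ.sup fun i => p i + ((-(q i) : ℝ) : WithBot ℝ)) ⊔
        ((Finset.univ.sup fun i => g i + ((-(q i) : ℝ) : WithBot ℝ)) +
          (Finset.univ.sup fun j => p j + ((-(h j) : ℝ) : WithBot ℝ))))
    (x : Fin n → ℝ)
    (hx : ∀ i, g i ≤ ((x i : ℝ) : WithBot ℝ) ∧ x i ≤ h i) :
    obj p q x = (θ : WithBot ℝ) ↔
      ∃ u : Fin n → ℝ,
        (∀ i, ((x i : ℝ) : WithBot ℝ) =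
          ((u i : ℝ) : WithBot ℝ) ⊔
            (p i + ((-θ : ℝ) : WithBot ℝ) +
              Finset.univ.sup fun j => ((u j - q j : ℝ) : WithBot ℝ))) ∧
        (∀ j, g j ≤ ((u j : ℝ) : WithBot ℝ) ∧
          (Finset.univ.sup fun i => Mmat p q θ i j + ((-(h i) : ℝ) : WithBot ℝ)) ≤
            ((-(u j) : ℝ) : WithBot ℝ)) := by
  obtain ⟨i0, hi0⟩ := hp
  haveI : Nonempty (Fin n) := ⟨i0⟩
  have hne : (Finset.univ : Finset (Fin n)).Nonempty := Finset.univ_nonempty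
  set P : WithBot ℝ := Finset.univ.sup fun j => p j + ((-(x j) : ℝ) : WithBot ℝ) with hP
  set Sx : ℝ := Finset.univ.sup' hne (fun i => x i - q i) with hSxdef
  have hSx : (Finset.univ.sup fun i => ((x i - q i : ℝ) : WithBot ℝ)) = ((Sx : ℝ) : WithBot ℝ) :=
    (Finset.coe_sup' hne _).symm
  have hobj_eq : obj p q x = ((Sx : ℝ) : WithBot ℝ) + P := by
    rw [obj, hSx]
  -- A ≤ θ pointwise
  have hA : ∀ i, p i + ((-(q i) : ℝ) : WithBot ℝ) ≤ ((θ : ℝ) : WithBot ℝ) := by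
    intro i
    rw [hθ]
    exact le_sup_of_le_left (Finset.le_sup (f := fun i => p i + ((-(q i) : ℝ) : WithBot ℝ)) (Finset.mem_univ i))
  -- lower bound θ ≤ obj
  have hlow : ((θ : ℝ) : WithBot ℝ) ≤ obj p q x := by
    rw [hθ, obj]
    apply sup_le
    · apply Finset.sup_le
      intro i _
      have h1 : ((x i - q i : ℝ) : WithBot ℝ) ≤
          Finset.univ.sup fun i => ((x i - q i : ℝ) : WithBot ℝ) :=
        Finset.le_sup (f := fun i => ((x i - q i : ℝ) : WithBot ℝ)) (Finset.mem_univ i)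
      have h2 : p i + ((-(x i) : ℝ) : WithBot ℝ) ≤
          Finset.univ.sup fun j => p j + ((-(x j) : ℝ) : WithBot ℝ) :=
        Finset.le_sup (f := fun j => p j + ((-(x j) : ℝ) : WithBot ℝ)) (Finset.mem_univ i)
      have key : p i + ((-(q i) : ℝ) : WithBot ℝ) =
          ((x i - q i : ℝ) : WithBot ℝ) + (p i + ((-(x i) : ℝ) : WithBot ℝ)) := by
        rcases eq_or_ne (p i) ⊥ with hpi | hpi
        · simp [hpi]
        · obtain ⟨a, ha⟩ : ∃ b : ℝ, p i = (b : WithBot ℝ) := ⟨(p i).unbot hpi, by simp⟩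
          rw [ha, ← WithBot.coe_add, ← WithBot.coe_add, ← WithBot.coe_add]
          exact_mod_cast (show a + -(q i) = (x i - q i) + (a + -(x i)) by ring)
      rw [key]
      exact add_le_add h1 h2
    · apply add_le_add
      · apply Finset.sup_le
        intro i _
        refine le_trans ?_ (Finset.le_sup (Finset.mem_univ i))
        have : ((x i - q i : ℝ) : WithBot ℝ) = ((x i : ℝ) : WithBot ℝ) + ((-(q i) : ℝ) : WithBot ℝ) := by
          rw [← WithBot.coe_add]
          exact_mod_cast (show x i - q i = x i + -(q i) by ring)
        rw [this]
        exact add_le_add_left (hx i).1 _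
      · apply Finset.sup_le
        intro j _
        refine le_trans ?_ (Finset.le_sup (Finset.mem_univ j))
        refine add_le_add_right ?_ _
        exact_mod_cast neg_le_neg (hx j).2
  constructor
  · -- forward: obj = θ → take u = x
    intro hobj
    have hobj' : ((Sx : ℝ) : WithBot ℝ) + P = ((θ : ℝ) : WithBot ℝ) := by
      rw [← hobj_eq]; exact hobj
    refine ⟨x, ?_, ?_⟩
    · intro i
      rw [hSx]
      have hle : p i + ((-θ : ℝ) : WithBot ℝ) + ((Sx : ℝ) : WithBot ℝ) ≤ ((x i : ℝ) : WithBot ℝ) := by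
        rcases eq_or_ne (p i) ⊥ with hpi | hpi
        · simp [hpi]
        · obtain ⟨a, ha⟩ : ∃ b : ℝ, p i = (b : WithBot ℝ) := ⟨(p i).unbot hpi, by simp⟩
          have h2 : p i + ((-(x i) : ℝ) : WithBot ℝ) ≤ P :=
            Finset.le_sup (f := fun j => p j + ((-(x j) : ℝ) : WithBot ℝ)) (Finset.mem_univ i)
          have h3 : ((Sx : ℝ) : WithBot ℝ) + (p i + ((-(x i) : ℝ) : WithBot ℝ)) ≤ ((θ : ℝ) : WithBot ℝ) := by
            rw [← hobj']
            exact add_le_add_right h2 _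
          rw [ha] at h3 ⊢
          have h4 : Sx + (a + -(x i)) ≤ θ := by exact_mod_cast h3
          have h5 : a + -θ + Sx ≤ x i := by linarith
          exact_mod_cast h5
      exact (sup_eq_left.mpr hle).symm
    · intro j
      refine ⟨(hx j).1, ?_⟩
      apply Finset.sup_le
      intro i _
      have hM : Mmat p q θ i j ≤ ((h i - x j : ℝ) : WithBot ℝ) := by
        rw [Mmat]
        apply sup_le
        · split_ifs with hij
          · subst hij
            exact_mod_cast (show (0:ℝ) ≤ h i - x i by linarith [(hx i).2])
          · exact bot_le
        · rcases eq_or_ne (p i) ⊥ with hpi | hpi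
          · simp [hpi]
          · obtain ⟨a, ha⟩ : ∃ b : ℝ, p i = (b : WithBot ℝ) := ⟨(p i).unbot hpi, by simp⟩
            have h1 : ((x j - q j : ℝ) : WithBot ℝ) ≤ ((Sx : ℝ) : WithBot ℝ) := by
              rw [← hSx]
              exact Finset.le_sup (f := fun i => ((x i - q i : ℝ) : WithBot ℝ)) (Finset.mem_univ j)
            have h2 : p i + ((-(h i) : ℝ) : WithBot ℝ) ≤ P := by
              refine le_trans ?_ (Finset.le_sup (f := fun j => p j + ((-(x j) : ℝ) : WithBot ℝ))
                (Finset.mem_univ i) : p i + ((-(x i) : ℝ) : WithBot ℝ) ≤ P)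
              refine add_le_add_right ?_ _
              exact_mod_cast neg_le_neg (hx i).2
            have h3 : ((x j - q j : ℝ) : WithBot ℝ) + (p i + ((-(h i) : ℝ) : WithBot ℝ)) ≤
                ((θ : ℝ) : WithBot ℝ) := by
              rw [← hobj']
              exact add_le_add h1 h2
            rw [ha] at h3 ⊢
            have h4 : (x j - q j) + (a + -(h i)) ≤ θ := by exact_mod_cast h3
            have h5 : a + (-θ - q j) ≤ h i - x j := by linarith
            exact_mod_cast h5
      calc Mmat p q θ i j + ((-(h i) : ℝ) : WithBot ℝ)
          ≤ ((h i - x j : ℝ) : WithBot ℝ) + ((-(h i) : ℝ) : WithBot ℝ) := add_le_add_left hM _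
        _ = ((-(x j) : ℝ) : WithBot ℝ) := by
            rw [← WithBot.coe_add]
            exact_mod_cast (show (h i - x j) + -(h i) = -(x j) by ring)
  · -- backward
    rintro ⟨u, ha, -⟩
    set Su : ℝ := Finset.univ.sup' hne (fun j => u j - q j) with hSudef
    have hSu : (Finset.univ.sup fun j => ((u j - q j : ℝ) : WithBot ℝ)) = ((Su : ℝ) : WithBot ℝ) :=
      (Finset.coe_sup' hne _).symm
    have ha' : ∀ i, ((x i : ℝ) : WithBot ℝ) =
        ((u i : ℝ) : WithBot ℝ) ⊔ (p i + ((-θ : ℝ) : WithBot ℝ) + ((Su : ℝ) : WithBot ℝ)) := by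
      intro i; rw [ha i, hSu]
    -- P ≤ θ - Su
    have hPle : P ≤ ((θ - Su : ℝ) : WithBot ℝ) := by
      apply Finset.sup_le
      intro j _
      rcases eq_or_ne (p j) ⊥ with hpj | hpj
      · simp [hpj]
      · obtain ⟨a, hpa⟩ : ∃ b : ℝ, p j = (b : WithBot ℝ) := ⟨(p j).unbot hpj, by simp⟩
        have h1 : p j + ((-θ : ℝ) : WithBot ℝ) + ((Su : ℝ) : WithBot ℝ) ≤ ((x j : ℝ) : WithBot ℝ) := by
          rw [ha' j]; exact le_sup_right
        rw [hpa] at h1 ⊢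
        have h2 : a + -θ + Su ≤ x j := by exact_mod_cast h1
        have h3 : a + -(x j) ≤ θ - Su := by linarith
        exact_mod_cast h3
    -- Sx ≤ Su
    have hSxSu : Sx ≤ Su := by
      apply Finset.sup'_le
      intro i _
      have h1 : ((x i : ℝ) : WithBot ℝ) ≤ ((Su + q i : ℝ) : WithBot ℝ) := by
        rw [ha' i]
        apply sup_le
        · have : u i - q i ≤ Su := Finset.le_sup' (f := fun j => u j - q j) (Finset.mem_univ i)
          exact_mod_cast (show u i ≤ Su + q i by linarith)
        · rcases eq_or_ne (p i) ⊥ with hpi | hpi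
          · simp [hpi]
          · obtain ⟨a, hpa⟩ : ∃ b : ℝ, p i = (b : WithBot ℝ) := ⟨(p i).unbot hpi, by simp⟩
            have h2 : p i + ((-(q i) : ℝ) : WithBot ℝ) ≤ ((θ : ℝ) : WithBot ℝ) := hA i
            rw [hpa] at h2 ⊢
            have h3 : a + -(q i) ≤ θ := by exact_mod_cast h2
            have h4 : a + -θ + Su ≤ Su + q i := by linarith
            exact_mod_cast h4
      have := WithBot.coe_le_coe.mp h1
      linarith
    have hup : obj p q x ≤ ((θ : ℝ) : WithBot ℝ) := by
      rw [hobj_eq]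
      calc ((Sx : ℝ) : WithBot ℝ) + P ≤ ((Su : ℝ) : WithBot ℝ) + ((θ - Su : ℝ) : WithBot ℝ) :=
            add_le_add (WithBot.coe_le_coe.mpr hSxSu) hPle
        _ = ((θ : ℝ) : WithBot ℝ) := by
            rw [← WithBot.coe_add]
            exact_mod_cast (show Su + (θ - Su) = θ by ring)
    exact le_antisymm hup hlow
end

section
/- Let p ∈ (ℝ∪{−∞})ⁿ be nonzero, q ∈ ℝⁿ regular, g ∈ (ℝ∪{−∞})ⁿ, and let B be an n×n matrix over ℝ∪{−∞} with Tr(B) ≤ 0 (every cyclic sequence of length m ≤ n has total weight ≤ 0). Then the minimum over all regular x ∈ ℝⁿ satisfying, for every i, max( max_{1≤j≤n}(B_{ij} + x_j) , g_i ) ≤ x_i, of f(x) = (max_{1≤i≤n}(x_i − q_i)) + (max_{1≤j≤n}(p_j − x_j)) equals θ = max_{1≤i,j≤n}( −q_i + (B*)_{ij} + p_j ), and this minimum is attained by some feasible regular x. -/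
/-!
Max-plus semifield modeled as `WithBot ℝ` (= ℝ ∪ {−∞}); `⊔` is max-plus addition.
The hypothesis Tr(B) ≤ 0 says every cyclic sequence of length m ≤ n has weight ≤ 0,
i.e. (B^m)_{ii} ≤ 0 for all 1 ≤ m ≤ n and all i.
-/

/-- Max-plus matrix product: (A⊗B)_{ij} = max_k (A_{ik} + B_{kj}). -/
noncomputable def mmul {n : ℕ} (A B : Fin n → Fin n → WithBot ℝ) :
    Fin n → Fin n → WithBot ℝ :=
  fun i j => Finset.univ.sup fun k => A i k + B k j

/-- Max-plus matrix powers, with A⁰ = I (0 on the diagonal, −∞ elsewhere). -/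
noncomputable def mpow {n : ℕ} (A : Fin n → Fin n → WithBot ℝ) :
    ℕ → Fin n → Fin n → WithBot ℝ
  | 0 => fun i j => if i = j then (0 : WithBot ℝ) else ⊥
  | m + 1 => mmul (mpow A m) A

/-- Kleene star: (A*)_{ij} = max_{0 ≤ m ≤ n−1} (A^m)_{ij}. -/
noncomputable def mstar {n : ℕ} (A : Fin n → Fin n → WithBot ℝ) :
    Fin n → Fin n → WithBot ℝ :=
  fun i j => (Finset.range n).sup fun m => mpow A m i j

open Finset

lemma wb_add_sup (a b c : WithBot ℝ) : a + (b ⊔ c) = (a + b) ⊔ (a + c) := by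
  rcases le_total b c with h | h
  · rw [sup_eq_right.2 h, sup_eq_right.2 (add_le_add_right h a)]
  · rw [sup_eq_left.2 h, sup_eq_left.2 (add_le_add_right h a)]

lemma wb_sup_add (a b c : WithBot ℝ) : (b ⊔ c) + a = (b + a) ⊔ (c + a) := by
  rw [add_comm, wb_add_sup, add_comm a b, add_comm a c]

lemma const_add_sup {α : Type*} (s : Finset α) (f : α → WithBot ℝ) (c : WithBot ℝ) :
    c + s.sup f = s.sup (fun x => c + f x) := by
  induction s using Finset.cons_induction with
  | empty => simp [WithBot.add_bot]
  | cons a s ha ih => rw [Finset.sup_cons, Finset.sup_cons, wb_add_sup, ih]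

lemma sup_add_const {α : Type*} (s : Finset α) (f : α → WithBot ℝ) (c : WithBot ℝ) :
    s.sup f + c = s.sup (fun x => f x + c) := by
  rw [add_comm, const_add_sup]; simp [add_comm]

lemma wb_le_of_add_le_add_left {s : ℝ} {a b : WithBot ℝ}
    (h : (s : WithBot ℝ) + a ≤ s + b) : a ≤ b :=
  (WithBot.add_le_add_iff_left (by simp)).1 h

section matrices
variable {n : ℕ} (B : Fin n → Fin n → WithBot ℝ)

lemma mpow_succ (m : ℕ) (i j : Fin n) :
    mpow B (m+1) i j = Finset.univ.sup fun k => mpow B m i k + B k j := rfl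

lemma mpow_one (i j : Fin n) : mpow B 1 i j = B i j := by
  rw [mpow_succ]
  apply le_antisymm
  · apply Finset.sup_le
    intro k _
    by_cases h : i = k
    · subst h; simp [mpow]
    · simp [mpow, h, WithBot.bot_add]
  · have := Finset.le_sup (f := fun k => mpow B 0 i k + B k j) (Finset.mem_univ i)
    simpa [mpow] using this

lemma mpow_add_le (m₁ m₂ : ℕ) (i k j : Fin n) :
    mpow B m₁ i k + mpow B m₂ k j ≤ mpow B (m₁ + m₂) i j := by
  induction m₂ generalizing j with
  | zero =>
    by_cases h : k = j
    · subst h; simp [mpow]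
    · simp [mpow, h, WithBot.add_bot]
  | succ m ih =>
    rw [mpow_succ, const_add_sup, show m₁ + (m+1) = (m₁ + m) + 1 from rfl, mpow_succ]
    apply Finset.sup_le
    intro l _
    refine le_trans ?_ (Finset.le_sup (Finset.mem_univ l))
    rw [← add_assoc]
    exact add_le_add_left (ih l) _

/-- path weight -/
noncomputable def pw (v : ℕ → Fin n) (m : ℕ) : WithBot ℝ :=
  ∑ t ∈ Finset.range m, B (v t) (v (t+1))

lemma pw_le (v : ℕ → Fin n) (m : ℕ) : pw B v m ≤ mpow B m (v 0) (v m) := by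
  induction m with
  | zero => simp [pw, mpow]
  | succ m ih =>
    rw [pw, Finset.sum_range_succ, mpow_succ]
    refine le_trans ?_ (Finset.le_sup (Finset.mem_univ (v m)))
    exact add_le_add_left ih _

lemma exists_path (m : ℕ) (i j : Fin n) :
    mpow B m i j = ⊥ ∨ ∃ v : ℕ → Fin n, v 0 = i ∧ v m = j ∧ mpow B m i j ≤ pw B v m := by
  induction m generalizing j with
  | zero =>
    by_cases h : i = j
    · subst h
      exact Or.inr ⟨fun _ => i, rfl, rfl, by simp [pw, mpow]⟩
    · exact Or.inl (by simp [mpow, h])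
  | succ m ih =>
    have hne : (Finset.univ : Finset (Fin n)).Nonempty := ⟨i, Finset.mem_univ i⟩
    obtain ⟨k, -, hk⟩ := Finset.exists_mem_eq_sup Finset.univ hne
      (fun k => mpow B m i k + B k j)
    rw [mpow_succ, hk]
    by_cases hb : mpow B m i k + B k j = ⊥
    · exact Or.inl hb
    have hb1 : mpow B m i k ≠ ⊥ := fun h => hb (by rw [h, WithBot.bot_add])
    rcases ih k with h | ⟨v, hv0, hvm, hvle⟩
    · exact absurd h hb1
    right
    refine ⟨fun t => if t ≤ m then v t else j, by simp [hv0], by simp, ?_⟩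
    have hpw : pw B (fun t => if t ≤ m then v t else j) (m+1) = pw B v m + B k j := by
      rw [pw, Finset.sum_range_succ]
      congr 1
      · apply Finset.sum_congr rfl
        intro t ht
        rw [Finset.mem_range] at ht
        simp only [if_pos (le_of_lt ht), if_pos (Nat.succ_le_of_lt ht)]
      · simp [hvm]
    rw [hpw]
    exact add_le_add_left hvle _
end matrices

lemma sum_Ico_shift (f : ℕ → WithBot ℝ) (a b k : ℕ) :
    (∑ t ∈ Finset.Ico a b, f (t + k)) = ∑ t ∈ Finset.Ico (a+k) (b+k), f t := by
  rw [Finset.sum_Ico_eq_sum_range, Finset.sum_Ico_eq_sum_range]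
  have : b + k - (a + k) = b - a := by omega
  rw [this]
  exact Finset.sum_congr rfl fun t _ => by congr 1; omega

section key
variable {n : ℕ} {B : Fin n → Fin n → WithBot ℝ}

lemma mpow_le_mstar (hB : ∀ m ∈ Finset.Icc 1 n, ∀ i, mpow B m i i ≤ 0) :
    ∀ m (i j : Fin n), mpow B m i j ≤ mstar B i j := by
  intro m
  induction m using Nat.strong_induction_on with
  | _ m IH =>
  intro i j
  by_cases hm : m < n
  · exact Finset.le_sup (f := fun m => mpow B m i j) (Finset.mem_range.2 hm)
  push_neg at hm
  rcases exists_path B m i j with h | ⟨v, hv0, hvm, hvle⟩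
  · simp [h]
  -- pigeonhole
  obtain ⟨a0, ha0, b0, hb0, hab0, heq0⟩ :
      ∃ a ∈ Finset.range (n+1), ∃ b ∈ Finset.range (n+1), a ≠ b ∧ v a = v b :=
    Finset.exists_ne_map_eq_of_card_lt_of_maps_to
      (by simp) (fun a _ => Finset.mem_univ (v a))
  rw [Finset.mem_range] at ha0 hb0
  set a := min a0 b0 with hadef
  set b := max a0 b0 with hbdef
  have hab : a < b := by omega
  have heq : v a = v b := by
    rcases le_total a0 b0 with h | h
    · rw [hadef, hbdef, min_eq_left h, max_eq_right h]; exact heq0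
    · rw [hadef, hbdef, min_eq_right h, max_eq_left h]; exact heq0.symm
  have hbn : b ≤ n := by omega
  set c := b - a with hc
  have hb' : a + c = b := by omega
  have hcm : c ≤ m := by omega
  have ham : a ≤ m - c := by omega
  -- spliced path
  set w : ℕ → Fin n := fun t => if t < a then v t else v (t + c) with hw
  have hw0 : w 0 = i := by
    by_cases h : 0 < a
    · simpa [hw, h] using hv0
    · have ha' : a = 0 := by omega
      have : w 0 = v b := by simp [hw, ha', ← hb', ha']
      rw [this, ← heq, ha', hv0]
  have hwm : w (m - c) = j := by
    have h1 : ¬ (m - c < a) := by omega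
    have h2 : m - c + c = m := by omega
    simp only [hw, if_neg h1, h2, hvm]
  -- edge weights
  set e : ℕ → WithBot ℝ := fun t => B (v t) (v (t+1)) with he
  have hedge1 : ∀ t, t < a → B (w t) (w (t+1)) = e t := by
    intro t ht
    by_cases h : t + 1 < a
    · simp [hw, he, ht, h]
    · have ht1 : t + 1 = a := by omega
      have hwt1 : w (t+1) = v a := by
        simp only [hw, ht1, lt_irrefl, if_false, hb', ← heq]
      simp only [hw, he, if_pos ht, ht1]
      rw [if_neg (lt_irrefl a), hb', ← heq]
  have hedge2 : ∀ t, a ≤ t → B (w t) (w (t+1)) = e (t + c) := by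
    intro t ht
    have h1 : ¬ (t < a) := by omega
    have h2 : ¬ (t + 1 < a) := by omega
    simp [hw, he, h1, h2, show t + 1 + c = t + c + 1 by omega]
  -- decompose pw v m
  have hsplit : pw B v m =
      ((∑ t ∈ Finset.range a, e t) + (∑ t ∈ Finset.Ico b m, e t))
        + (∑ t ∈ Finset.Ico a b, e t) := by
    rw [pw, Finset.range_eq_Ico,
      ← Finset.sum_Ico_consecutive e (Nat.zero_le a) (le_trans (le_of_lt hab) (le_trans hbn hm)),
      ← Finset.sum_Ico_consecutive e (le_of_lt hab) (le_trans hbn hm), ← Finset.range_eq_Ico,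
      add_comm (∑ t ∈ Finset.Ico a b, e t) (∑ t ∈ Finset.Ico b m, e t), ← add_assoc]
  -- spliced weight
  have hspl : pw B w (m - c) =
      (∑ t ∈ Finset.range a, e t) + (∑ t ∈ Finset.Ico b m, e t) := by
    rw [pw, Finset.range_eq_Ico, ← Finset.sum_Ico_consecutive _ (Nat.zero_le a) ham,
      ← Finset.range_eq_Ico]
    congr 1
    · exact Finset.sum_congr rfl fun t ht => hedge1 t (Finset.mem_range.1 ht)
    · rw [show (∑ t ∈ Finset.Ico a (m-c), B (w t) (w (t+1)))
          = ∑ t ∈ Finset.Ico a (m-c), e (t + c) from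
        Finset.sum_congr rfl fun t ht => hedge2 t (Finset.mem_Ico.1 ht).1,
        sum_Ico_shift, hb', show m - c + c = m by omega]
  -- cycle weight ≤ 0
  have hcyc : (∑ t ∈ Finset.Ico a b, e t) ≤ 0 := by
    have h1 : (∑ t ∈ Finset.Ico a b, e t) = pw B (fun t => v (a + t)) c := by
      rw [pw]
      rw [show (∑ t ∈ Finset.range c, B (v (a+t)) (v (a+(t+1))))
          = ∑ t ∈ Finset.range c, e (t + a) from
        Finset.sum_congr rfl fun t ht => by
          simp only [he]
          rw [show a + t = t + a by omega, show a + (t+1) = t + a + 1 by omega],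
        Finset.range_eq_Ico, sum_Ico_shift, show 0 + a = a by omega,
        show c + a = b by omega]
    rw [h1]
    refine le_trans (pw_le B _ c) ?_
    have h2 : v (a + 0) = v a := by norm_num
    have h3 : v (a + c) = v a := by rw [hb', ← heq]
    rw [h2, h3]
    exact hB c (Finset.mem_Icc.2 ⟨by omega, by omega⟩) (v a)
  -- combine
  have hle2 : pw B v m ≤ pw B w (m - c) := by
    rw [hsplit, hspl]
    calc ((∑ t ∈ Finset.range a, e t) + (∑ t ∈ Finset.Ico b m, e t))
          + (∑ t ∈ Finset.Ico a b, e t)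
        ≤ ((∑ t ∈ Finset.range a, e t) + (∑ t ∈ Finset.Ico b m, e t)) + 0 :=
          add_le_add_right hcyc _
      _ = _ := add_zero _
  have hle3 : pw B w (m - c) ≤ mpow B (m - c) i j := by
    have := pw_le B w (m - c)
    rwa [hw0, hwm] at this
  exact le_trans hvle (le_trans hle2 (le_trans hle3 (IH (m - c) (by omega) i j)))
end key

section cor
variable {n : ℕ} {B : Fin n → Fin n → WithBot ℝ}
variable (hB : ∀ m ∈ Finset.Icc 1 n, ∀ i, mpow B m i i ≤ 0)

lemma mstar_diag (i : Fin n) : (0 : WithBot ℝ) ≤ mstar B i i := by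
  refine le_trans ?_ (Finset.le_sup (f := fun m => mpow B m i i) (Finset.mem_range.2 i.pos))
  simp [mpow]

include hB in
lemma B_add_mstar_le (i j k : Fin n) : B i j + mstar B j k ≤ mstar B i k := by
  rw [show mstar B j k = (Finset.range n).sup fun m => mpow B m j k from rfl, const_add_sup]
  apply Finset.sup_le
  intro m _
  rw [← mpow_one B i j]
  exact le_trans (mpow_add_le B 1 m i j k) (mpow_le_mstar hB (1+m) i k)

include hB in
lemma mstar_trans (i k j : Fin n) : mstar B i k + mstar B k j ≤ mstar B i j := by
  rw [show mstar B i k = (Finset.range n).sup fun m => mpow B m i k from rfl, sup_add_const]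
  apply Finset.sup_le
  intro m₁ _
  rw [show mstar B k j = (Finset.range n).sup fun m => mpow B m k j from rfl, const_add_sup]
  apply Finset.sup_le
  intro m₂ _
  exact le_trans (mpow_add_le B m₁ m₂ i k j) (mpow_le_mstar hB (m₁+m₂) i j)

lemma mpow_apply_le (x : Fin n → ℝ)
    (hx : ∀ i, (Finset.univ.sup fun j => B i j + ((x j : ℝ) : WithBot ℝ)) ≤ (x i : ℝ)) :
    ∀ m (i j : Fin n), mpow B m i j + (x j : ℝ) ≤ ((x i : ℝ) : WithBot ℝ) := by
  intro m
  induction m with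
  | zero =>
    intro i j
    by_cases h : i = j
    · subst h; simp [mpow]
    · simp [mpow, h, WithBot.bot_add]
  | succ m ih =>
    intro i j
    rw [mpow_succ, sup_add_const]
    apply Finset.sup_le
    intro k _
    rw [add_assoc]
    refine le_trans (add_le_add_right ?_ _) (ih i k)
    exact le_trans (Finset.le_sup (f := fun j => B k j + ((x j : ℝ) : WithBot ℝ)) (Finset.mem_univ j)) (hx k)

lemma mstar_apply_le (x : Fin n → ℝ)
    (hx : ∀ i, (Finset.univ.sup fun j => B i j + ((x j : ℝ) : WithBot ℝ)) ≤ (x i : ℝ)) :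
    ∀ (i j : Fin n), mstar B i j + (x j : ℝ) ≤ ((x i : ℝ) : WithBot ℝ) := by
  intro i j
  rw [show mstar B i j = (Finset.range n).sup fun m => mpow B m i j from rfl, sup_add_const]
  exact Finset.sup_le fun m _ => mpow_apply_le x hx m i j

end cor

lemma coe_ne_bot' {a : WithBot ℝ} {r : ℝ} (h : (r : WithBot ℝ) ≤ a) : a ≠ ⊥ :=
  fun hb => absurd (hb ▸ h) (by simp)

lemma finset_sup_sup {α : Type*} (s : Finset α) (f g : α → WithBot ℝ) :
    s.sup (fun i => f i ⊔ g i) = s.sup f ⊔ s.sup g := by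
  induction s using Finset.cons_induction with
  | empty => simp
  | cons a s ha ih =>
    rw [Finset.sup_cons, Finset.sup_cons, Finset.sup_cons, ih]
    apply le_antisymm
    · exact sup_le (sup_le (le_sup_of_le_left le_sup_left) (le_sup_of_le_right le_sup_left))
        (sup_le (le_sup_of_le_left le_sup_right) (le_sup_of_le_right le_sup_right))
    · exact sup_le (sup_le (le_sup_of_le_left le_sup_left) (le_sup_of_le_right le_sup_left))
        (sup_le (le_sup_of_le_left le_sup_right) (le_sup_of_le_right le_sup_right))

lemma exists_real {a : WithBot ℝ} (h : a ≠ ⊥) : ∃ r : ℝ, a = (r : WithBot ℝ) := by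
  cases a with
  | bot => exact absurd rfl h
  | coe r => exact ⟨r, rfl⟩


/-- Linear-inequality constrained problem: the minimum of f over regular x with
Bx ⊕ g ≤ x equals θ = max_{i,j}(−q_i + (B*)_{ij} + p_j), a real number, and it is
attained by some feasible regular x. -/
theorem stmt_6 {n : ℕ} (p : Fin n → WithBot ℝ) (q : Fin n → ℝ)
    (g : Fin n → WithBot ℝ) (B : Fin n → Fin n → WithBot ℝ)
    (hp : ∃ i, p i ≠ ⊥)
    (hB : ∀ m ∈ Finset.Icc 1 n, ∀ i, mpow B m i i ≤ 0) :
    ∃ θ : ℝ,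
      ((θ : WithBot ℝ) = Finset.univ.sup fun i => Finset.univ.sup fun j =>
          ((-(q i) : ℝ) : WithBot ℝ) + mstar B i j + p j) ∧
      IsLeast
        {v | ∃ x : Fin n → ℝ,
          (∀ i, (Finset.univ.sup fun j => B i j + ((x j : ℝ) : WithBot ℝ)) ⊔ g i ≤
            ((x i : ℝ) : WithBot ℝ)) ∧
          obj p q x = v}
        (θ : WithBot ℝ) := by
  classical
  obtain ⟨j0, hj0⟩ := hp
  have hne : (Finset.univ : Finset (Fin n)).Nonempty := ⟨j0, Finset.mem_univ j0⟩
  set θw : WithBot ℝ := Finset.univ.sup fun i => Finset.univ.sup fun j =>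
      ((-(q i) : ℝ) : WithBot ℝ) + mstar B i j + p j with hθw
  -- θw is not ⊥
  obtain ⟨pj0, hpj0⟩ := exists_real hj0
  obtain ⟨s0, hs0⟩ := exists_real (coe_ne_bot' (r := 0) (by simpa using mstar_diag (B := B) j0))
  have hterm : ((-(q j0) : ℝ) : WithBot ℝ) + mstar B j0 j0 + p j0 ≠ ⊥ := by
    rw [hpj0, hs0, ← WithBot.coe_add, ← WithBot.coe_add]
    exact WithBot.coe_ne_bot
  have hθbot : θw ≠ ⊥ := by
    refine coe_ne_bot' (r := -(q j0) + s0 + pj0) ?_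
    rw [hθw]
    refine le_trans ?_ (Finset.le_sup (Finset.mem_univ j0))
    refine le_trans ?_ (Finset.le_sup (f := fun j =>
      ((-(q j0) : ℝ) : WithBot ℝ) + mstar B j0 j + p j) (Finset.mem_univ j0))
    show ((-(q j0) + s0 + pj0 : ℝ) : WithBot ℝ) ≤ ((-(q j0) : ℝ) : WithBot ℝ) + mstar B j0 j0 + p j0
    rw [hpj0, hs0, ← WithBot.coe_add, ← WithBot.coe_add]
  obtain ⟨θ, hθ⟩ := exists_real hθbot
  refine ⟨θ, hθ.symm, ?_, ?_⟩
  · -- membership : construct the optimal x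
    set Y : Fin n → WithBot ℝ := fun i => Finset.univ.sup fun j => mstar B i j + p j with hY
    set Z : Fin n → WithBot ℝ := fun i => Finset.univ.sup fun j => mstar B i j with hZ
    have hZb : ∀ i, ((0:ℝ) : WithBot ℝ) ≤ Z i := fun i => by
      refine le_trans ?_ (Finset.le_sup (f := fun j => mstar B i j) (Finset.mem_univ i))
      simpa using mstar_diag (B := B) i
    have hZr : ∀ i, ∃ r : ℝ, Z i = (r : WithBot ℝ) := fun i => exists_real (coe_ne_bot' (hZb i))
    choose z hz using hZr
    have hθY : θw = Finset.univ.sup fun i => ((-(q i) : ℝ) : WithBot ℝ) + Y i := by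
      rw [hθw]
      refine Finset.sup_congr rfl fun i _ => ?_
      rw [show Y i = Finset.univ.sup fun j => mstar B i j + p j from rfl, const_add_sup]
      exact Finset.sup_congr rfl fun j _ => add_assoc _ _ _
    -- argmax pair
    obtain ⟨ik, -, hik⟩ := Finset.exists_mem_eq_sup (Finset.univ : Finset (Fin n × Fin n))
      ⟨(j0, j0), Finset.mem_univ _⟩ (fun ik => mstar B ik.1 ik.2 + p ik.2)
    obtain ⟨i1, k1⟩ := ik
    have hmax : ∀ i k : Fin n, mstar B i k + p k ≤ mstar B i1 k1 + p k1 := fun i k => by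
      refine le_trans (Finset.le_sup (f := fun ik : Fin n × Fin n =>
        mstar B ik.1 ik.2 + p ik.2) (Finset.mem_univ (i, k))) ?_
      rw [← hik]
    have hmaxb : mstar B i1 k1 + p k1 ≠ ⊥ := by
      refine coe_ne_bot' (r := s0 + pj0) ?_
      rw [WithBot.coe_add, ← hs0, ← hpj0]
      exact hmax j0 j0
    have hpk1 : p k1 ≠ ⊥ := fun h => hmaxb (by rw [h, WithBot.add_bot])
    obtain ⟨pk, hpk⟩ := exists_real hpk1
    have hsk1 : mstar B i1 k1 ≠ ⊥ := fun h => hmaxb (by rw [h, WithBot.bot_add])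
    obtain ⟨s1, hs1⟩ := exists_real hsk1
    have hYk : Y k1 = p k1 := by
      apply le_antisymm
      · apply Finset.sup_le
        intro l _
        apply wb_le_of_add_le_add_left (s := s1)
        calc (s1 : WithBot ℝ) + (mstar B k1 l + p l)
            = (mstar B i1 k1 + mstar B k1 l) + p l := by rw [hs1, add_assoc]
          _ ≤ mstar B i1 l + p l := add_le_add_left (mstar_trans hB i1 k1 l) _
          _ ≤ mstar B i1 k1 + p k1 := hmax i1 l
          _ = (s1 : WithBot ℝ) + p k1 := by rw [hs1]
      · refine le_trans ?_ (Finset.le_sup (f := fun j => mstar B k1 j + p j)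
          (Finset.mem_univ k1))
        calc p k1 = 0 + p k1 := (zero_add _).symm
          _ ≤ mstar B k1 k1 + p k1 := add_le_add_left (mstar_diag k1) _
    -- the scaling constant M
    set M : ℝ := Finset.univ.sup' hne (fun i => max (z i - q i - θ) (z i - pk)) with hMdef
    have hM1 : ∀ i, z i - q i - θ ≤ M := fun i =>
      le_trans (le_max_left _ _)
        (Finset.le_sup' (fun i => max (z i - q i - θ) (z i - pk)) (Finset.mem_univ i))
    have hM2 : z k1 - pk ≤ M :=
      le_trans (le_max_right _ _)
        (Finset.le_sup' (fun i => max (z i - q i - θ) (z i - pk)) (Finset.mem_univ k1))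
    set X : Fin n → WithBot ℝ := fun i => Y i ⊔ (((z i - M : ℝ)) : WithBot ℝ) with hXdef
    have hXr : ∀ i, ∃ r : ℝ, X i = (r : WithBot ℝ) := fun i =>
      exists_real (coe_ne_bot' (le_sup_right : ((z i - M : ℝ) : WithBot ℝ) ≤ X i))
    choose xr hxr using hXr
    have hpY : ∀ j, p j ≤ Y j := fun j => by
      refine le_trans ?_ (Finset.le_sup (f := fun l => mstar B j l + p l) (Finset.mem_univ j))
      calc p j = 0 + p j := (zero_add _).symm
        _ ≤ mstar B j j + p j := add_le_add_left (mstar_diag j) _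
    have hYX : ∀ i, Y i ≤ X i := fun i => le_sup_left
    have hpX : ∀ j, p j ≤ X j := fun j => (hpY j).trans (hYX j)
    have hXk1 : X k1 = ((pk : ℝ) : WithBot ℝ) := by
      apply le_antisymm
      · refine sup_le ?_ ?_
        · rw [hYk, hpk]
        · exact WithBot.coe_le_coe.2 (by linarith)
      · rw [← hpk, ← hYk]; exact le_sup_left
    have hxrk1 : xr k1 = pk := by
      have h := hxr k1
      rw [hXk1] at h
      exact_mod_cast h.symm
    -- feasibility (pre-shift)
    have hBX : ∀ i, (Finset.univ.sup fun j => B i j + X j) ≤ X i := by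
      intro i
      apply Finset.sup_le
      intro j _
      show B i j + (Y j ⊔ (((z j - M : ℝ)) : WithBot ℝ)) ≤ X i
      rw [wb_add_sup]
      refine sup_le ?_ ?_
      · show B i j + (Finset.univ.sup fun k => mstar B j k + p k) ≤ X i
        rw [const_add_sup]
        apply Finset.sup_le
        intro k _
        refine le_trans ?_ ((Finset.le_sup (f := fun k => mstar B i k + p k)
          (Finset.mem_univ k)).trans (hYX i))
        rw [← add_assoc]
        exact add_le_add_left (B_add_mstar_le hB i j k) _
      · have h1 : B i j + Z j ≤ Z i := by
          show B i j + (Finset.univ.sup fun k => mstar B j k) ≤ Z i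
          rw [const_add_sup]
          apply Finset.sup_le
          intro k _
          exact le_trans (B_add_mstar_le hB i j k)
            (Finset.le_sup (f := fun k => mstar B i k) (Finset.mem_univ k))
        have e1 : ∀ l, (((z l - M : ℝ)) : WithBot ℝ) = Z l + ((-M : ℝ) : WithBot ℝ) := by
          intro l
          rw [hz l, ← WithBot.coe_add, sub_eq_add_neg]
        rw [e1 j, ← add_assoc]
        refine le_trans (add_le_add_left h1 _) ?_
        rw [← e1 i]
        exact le_sup_right
    -- value of the first sup
    have hS1 : (Finset.univ.sup fun i => ((-(q i) : ℝ) : WithBot ℝ) + X i) = (θ : WithBot ℝ) := by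
      have hsplit : ∀ i, ((-(q i) : ℝ) : WithBot ℝ) + X i
          = (((-(q i) : ℝ) : WithBot ℝ) + Y i) ⊔ (((-(q i) + (z i - M) : ℝ)) : WithBot ℝ) := by
        intro i
        show ((-(q i) : ℝ) : WithBot ℝ) + (Y i ⊔ _) = _
        rw [wb_add_sup, ← WithBot.coe_add]
      rw [Finset.sup_congr rfl fun i _ => hsplit i, finset_sup_sup, ← hθY, hθ, sup_eq_left]
      apply Finset.sup_le
      intro i _
      exact WithBot.coe_le_coe.2 (by have := hM1 i; linarith)
    -- value of the second sup (pre-shift)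
    have hS2 : (Finset.univ.sup fun j => p j + ((-(xr j) : ℝ) : WithBot ℝ)) = (0 : WithBot ℝ) := by
      apply le_antisymm
      · apply Finset.sup_le
        intro j _
        calc p j + ((-(xr j) : ℝ) : WithBot ℝ)
            ≤ ((xr j : ℝ) : WithBot ℝ) + ((-(xr j) : ℝ) : WithBot ℝ) :=
              add_le_add_left (by rw [← hxr j]; exact hpX j) _
          _ = (0 : WithBot ℝ) := by rw [← WithBot.coe_add]; norm_num
      · refine le_trans ?_ (Finset.le_sup (f := fun j => p j + ((-(xr j) : ℝ) : WithBot ℝ))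
          (Finset.mem_univ k1))
        show (0 : WithBot ℝ) ≤ p k1 + ((-(xr k1) : ℝ) : WithBot ℝ)
        rw [hpk, hxrk1, ← WithBot.coe_add]
        norm_num
    -- the shift and the final x
    set lam : ℝ := Finset.univ.sup' hne (fun i => (g i).unbotD 0 - xr i) with hlam
    have hlam1 : ∀ i, (g i).unbotD 0 - xr i ≤ lam := fun i =>
      Finset.le_sup' (fun i => (g i).unbotD 0 - xr i) (Finset.mem_univ i)
    refine ⟨fun i => xr i + lam, ?_, ?_⟩
    · intro i
      refine sup_le ?_ ?_
      · have e2 : ∀ l, ((xr l + lam : ℝ) : WithBot ℝ) = X l + ((lam : ℝ) : WithBot ℝ) := by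
          intro l
          rw [hxr l, ← WithBot.coe_add]
        have : (Finset.univ.sup fun j => B i j + ((xr j + lam : ℝ) : WithBot ℝ))
            = (Finset.univ.sup fun j => B i j + X j) + ((lam : ℝ) : WithBot ℝ) := by
          rw [sup_add_const]
          exact Finset.sup_congr rfl fun j _ => by rw [e2 j, add_assoc]
        rw [this, e2 i]
        exact add_le_add_left (hBX i) _
      · have h1 : g i ≤ (((g i).unbotD 0 : ℝ) : WithBot ℝ) := by
          cases hgi : g i with
          | bot => exact bot_le
          | coe r => simp
        refine le_trans h1 (WithBot.coe_le_coe.2 ?_)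
        show WithBot.unbotD 0 (g i) ≤ xr i + lam
        have := hlam1 i
        linarith
    · show obj p q (fun i => xr i + lam) = (θ : WithBot ℝ)
      have e3 : (Finset.univ.sup fun i => (((fun i => xr i + lam) i - q i : ℝ) : WithBot ℝ))
          = (Finset.univ.sup fun i => ((-(q i) : ℝ) : WithBot ℝ) + X i) + ((lam : ℝ) : WithBot ℝ) := by
        rw [sup_add_const]
        refine Finset.sup_congr rfl fun i _ => ?_
        rw [hxr i, ← WithBot.coe_add, ← WithBot.coe_add]
        congr 1
        ring
      have e4 : (Finset.univ.sup fun j => p j + ((-((fun i => xr i + lam) j) : ℝ) : WithBot ℝ))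
          = (Finset.univ.sup fun j => p j + ((-(xr j) : ℝ) : WithBot ℝ)) + ((-lam : ℝ) : WithBot ℝ) := by
        rw [sup_add_const]
        refine Finset.sup_congr rfl fun j _ => ?_
        rw [add_assoc, ← WithBot.coe_add]
        congr 2
        ring
      rw [obj, e3, e4, hS1, hS2, zero_add, ← WithBot.coe_add, ← WithBot.coe_add]
      congr 1
      ring
  · -- lower bound
    rintro v ⟨x, hxc, rfl⟩
    have hxc' : ∀ i, (Finset.univ.sup fun j => B i j + ((x j : ℝ) : WithBot ℝ)) ≤ (x i : ℝ) :=
      fun i => le_trans le_sup_left (hxc i)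
    rw [← hθ, hθw]
    apply Finset.sup_le
    intro i _
    apply Finset.sup_le
    intro j _
    -- mstar B i j ≤ x i - x j
    have hstar : mstar B i j ≤ ((x i - x j : ℝ) : WithBot ℝ) := by
      have h1 := add_le_add_left (mstar_apply_le x hxc' i j) ((-(x j) : ℝ) : WithBot ℝ)
      rw [add_assoc, ← WithBot.coe_add, ← WithBot.coe_add] at h1
      simpa [sub_eq_add_neg] using h1
    calc ((-(q i) : ℝ) : WithBot ℝ) + mstar B i j + p j
        ≤ ((-(q i) : ℝ) : WithBot ℝ) + ((x i - x j : ℝ) : WithBot ℝ) + p j :=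
          add_le_add_left (add_le_add_right hstar _) _
      _ = ((x i - q i : ℝ) : WithBot ℝ) + (p j + ((-(x j) : ℝ) : WithBot ℝ)) := by
          rw [← WithBot.coe_add, add_comm (p j) _, ← add_assoc, ← WithBot.coe_add]
          congr 2
          ring
      _ ≤ obj p q x := by
          refine add_le_add ?_ ?_
          · exact Finset.le_sup (f := fun i => ((x i - q i : ℝ) : WithBot ℝ)) (Finset.mem_univ i)
          · exact Finset.le_sup (f := fun j => p j + ((-(x j) : ℝ) : WithBot ℝ)) (Finset.mem_univ j)
end

section
/- Let C be an n×n matrix over ℝ∪{−∞} that is regular (every row and every column contains a real entry), f ∈ ℝⁿ, and g ∈ (ℝ∪{−∞})ⁿ such that max_{1≤i,j≤n}( C_{ij} + g_j − f_i ) ≤ 0. Then the minimum over all x ∈ ℝⁿ satisfying max_{1≤j≤n}(C_{ij} + x_j) ≤ f_i and g_i ≤ x_i for all i, of F(x) = (max_{1≤i,j≤n}(C_{ij} + x_j)) + (max_{1≤k≤n}(−x_k)), equals θ = max( max_{i,j} C_{ij} , (max_{i,j}(C_{ij} + g_j)) + (max_{i,j}(C_{ij} − f_i)) ), and this minimum is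 attained by some feasible x. -/
/-!
Max-plus semifield modeled as `WithBot ℝ` (= ℝ ∪ {−∞}); `⊔` is max-plus addition.
A matrix is regular when every row and every column has a real (≠ −∞) entry.
The hypothesis f⁻Cg ≤ 1 reads max_{i,j}(C_{ij} + g_j − f_i) ≤ 0.
-/

/-- The makespan objective F(x) = (max_{i,j}(C_{ij} + x_j)) + (max_k (−x_k)). -/
noncomputable def makespan {n : ℕ} (C : Fin n → Fin n → WithBot ℝ)
    (x : Fin n → ℝ) : WithBot ℝ :=
  (Finset.univ.sup fun i => Finset.univ.sup fun j => C i j + ((x j : ℝ) : WithBot ℝ)) +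
    (Finset.univ.sup fun k => ((-(x k) : ℝ) : WithBot ℝ))

private lemma wb_shift (t : WithBot ℝ) (r s : ℝ) :
    t + (r : WithBot ℝ) ≤ (s : WithBot ℝ) ↔ t ≤ ((s - r : ℝ) : WithBot ℝ) := by
  induction t using WithBot.recBotCoe with
  | bot => simp
  | coe c =>
    rw [← WithBot.coe_add, WithBot.coe_le_coe, WithBot.coe_le_coe]
    constructor <;> intro h <;> linarith

private lemma wb_cancel (t : WithBot ℝ) (r : ℝ) :
    t + (r : WithBot ℝ) + ((-r : ℝ) : WithBot ℝ) = t := by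
  induction t using WithBot.recBotCoe with
  | bot => simp
  | coe c => rw [← WithBot.coe_add, ← WithBot.coe_add]; norm_num

private lemma wb_ne_bot_of_coe_le {c : ℝ} {m : WithBot ℝ} (h : (c : WithBot ℝ) ≤ m) :
    m ≠ ⊥ := fun hb => by simp [hb] at h

private lemma le_nsup {n : ℕ} (F : Fin n → Fin n → WithBot ℝ) (i j : Fin n) :
    F i j ≤ Finset.univ.sup (fun i => Finset.univ.sup fun j => F i j) :=
  le_trans (Finset.le_sup (Finset.mem_univ j))
    (Finset.le_sup (f := fun i => Finset.univ.sup fun j => F i j) (Finset.mem_univ i))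

/-- Scheduling under start-finish, late-finish (due date, Cx ≤ f) and early-start
(g ≤ x) constraints: the minimum makespan equals
θ = max(max_{i,j} C_{ij}, (max_{i,j}(C_{ij} + g_j)) + (max_{i,j}(C_{ij} − f_i))),
and it is attained by some feasible x. -/
theorem stmt_10 {n : ℕ} (hn : 0 < n) (C : Fin n → Fin n → WithBot ℝ)
    (hCrow : ∀ i, ∃ j, C i j ≠ ⊥) (hCcol : ∀ j, ∃ i, C i j ≠ ⊥)
    (f : Fin n → ℝ) (g : Fin n → WithBot ℝ)
    (hfg : (Finset.univ.sup fun i => Finset.univ.sup fun j =>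
        C i j + g j + ((-(f i) : ℝ) : WithBot ℝ)) ≤ 0) :
    ∃ θ : ℝ,
      ((θ : WithBot ℝ) =
        (Finset.univ.sup fun i => Finset.univ.sup fun j => C i j) ⊔
          ((Finset.univ.sup fun i => Finset.univ.sup fun j => C i j + g j) +
            (Finset.univ.sup fun i => Finset.univ.sup fun j =>
              C i j + ((-(f i) : ℝ) : WithBot ℝ)))) ∧
      IsLeast
        {v | ∃ x : Fin n → ℝ,
          (∀ i, (Finset.univ.sup fun j => C i j + ((x j : ℝ) : WithBot ℝ)) ≤
              ((f i : ℝ) : WithBot ℝ) ∧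
            g i ≤ ((x i : ℝ) : WithBot ℝ)) ∧
          makespan C x = v}
        (θ : WithBot ℝ) := by
  classical
  set nC := (Finset.univ.sup fun i => Finset.univ.sup fun j => C i j) with hnC_def
  set nCg := (Finset.univ.sup fun i => Finset.univ.sup fun j => C i j + g j) with hnCg_def
  set α := (Finset.univ.sup fun i => Finset.univ.sup fun j =>
      C i j + ((-(f i) : ℝ) : WithBot ℝ)) with hα_def
  set M := nC ⊔ (nCg + α) with hM_def
  -- a witness real entry of C
  obtain ⟨j₀, hj₀⟩ := hCrow ⟨0, hn⟩
  obtain ⟨c₀, hc₀⟩ := WithBot.ne_bot_iff_exists.mp hj₀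
  -- α is not ⊥
  have hα_ne : α ≠ ⊥ := by
    apply wb_ne_bot_of_coe_le (c := c₀ + (-(f ⟨0, hn⟩)))
    calc ((c₀ + (-(f ⟨0, hn⟩)) : ℝ) : WithBot ℝ)
        = C ⟨0, hn⟩ j₀ + ((-(f ⟨0, hn⟩) : ℝ) : WithBot ℝ) := by
          rw [WithBot.coe_add, hc₀]
      _ ≤ α := le_nsup (fun i j => C i j + ((-(f i) : ℝ) : WithBot ℝ)) ⟨0, hn⟩ j₀
  set a := α.unbot hα_ne with ha_def
  have ha : ((a : ℝ) : WithBot ℝ) = α := WithBot.coe_unbot α hα_ne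
  -- M is not ⊥
  have hM_ne : M ≠ ⊥ := by
    apply wb_ne_bot_of_coe_le (c := c₀)
    calc ((c₀ : ℝ) : WithBot ℝ) = C ⟨0, hn⟩ j₀ := hc₀
      _ ≤ nC := le_nsup C ⟨0, hn⟩ j₀
      _ ≤ M := le_sup_left
  set θ := M.unbot hM_ne with hθ_def
  have hθ : ((θ : ℝ) : WithBot ℝ) = M := WithBot.coe_unbot M hM_ne
  -- the optimal point
  have hsupne : ∀ j, g j ⊔ ((-a : ℝ) : WithBot ℝ) ≠ ⊥ :=
    fun j => wb_ne_bot_of_coe_le (c := -a) le_sup_right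
  set x₀ : Fin n → ℝ := fun j => (g j ⊔ ((-a : ℝ) : WithBot ℝ)).unbot (hsupne j) with hx₀_def
  have hx₀ : ∀ j, ((x₀ j : ℝ) : WithBot ℝ) = g j ⊔ ((-a : ℝ) : WithBot ℝ) :=
    fun j => WithBot.coe_unbot _ _
  -- feasibility of x₀
  have hfeas : ∀ i, (Finset.univ.sup fun j => C i j + ((x₀ j : ℝ) : WithBot ℝ)) ≤
      ((f i : ℝ) : WithBot ℝ) ∧ g i ≤ ((x₀ i : ℝ) : WithBot ℝ) := by
    intro i
    constructor
    · apply Finset.sup_le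
      intro j _
      rw [hx₀ j]
      rcases le_total (g j) ((-a : ℝ) : WithBot ℝ) with h | h
      · rw [sup_eq_right.mpr h]
        rw [wb_shift]
        have h1 : C i j + ((-(f i) : ℝ) : WithBot ℝ) ≤ ((a : ℝ) : WithBot ℝ) := by
          rw [ha]
          exact le_nsup (fun i j => C i j + ((-(f i) : ℝ) : WithBot ℝ)) i j
        have h2 := (wb_shift _ _ _).mp h1
        have he : a - -(f i) = f i - -a := by ring
        rwa [he] at h2
      · rw [sup_eq_left.mpr h]
        have h1 : C i j + g j + ((-(f i) : ℝ) : WithBot ℝ) ≤ 0 :=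
          le_trans (le_nsup (fun i j => C i j + g j + ((-(f i) : ℝ) : WithBot ℝ)) i j) hfg
        rw [show (0 : WithBot ℝ) = ((0 : ℝ) : WithBot ℝ) from rfl] at h1
        have h2 := (wb_shift _ _ _).mp h1
        have he : (0 : ℝ) - -(f i) = f i := by ring
        rwa [he] at h2
    · rw [hx₀ i]; exact le_sup_left
  -- lower bound: every feasible makespan is ≥ M
  have hlow : ∀ x : Fin n → ℝ,
      (∀ i, (Finset.univ.sup fun j => C i j + ((x j : ℝ) : WithBot ℝ)) ≤
          ((f i : ℝ) : WithBot ℝ) ∧ g i ≤ ((x i : ℝ) : WithBot ℝ)) →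
      M ≤ makespan C x := by
    intro x hx
    unfold makespan
    apply sup_le
    · -- nC ≤ S + T
      apply Finset.sup_le; intro i _; apply Finset.sup_le; intro j _
      calc C i j = C i j + ((x j : ℝ) : WithBot ℝ) + ((-(x j) : ℝ) : WithBot ℝ) :=
            (wb_cancel (C i j) (x j)).symm
        _ ≤ _ := add_le_add
            (le_nsup (fun i j => C i j + ((x j : ℝ) : WithBot ℝ)) i j)
            (Finset.le_sup (f := fun k => ((-(x k) : ℝ) : WithBot ℝ)) (Finset.mem_univ j))
    · -- nCg + α ≤ S + T
      apply add_le_add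
      · apply Finset.sup_le; intro i _; apply Finset.sup_le; intro j _
        calc C i j + g j ≤ C i j + ((x j : ℝ) : WithBot ℝ) :=
              add_le_add_right (hx j).2 _
          _ ≤ _ := le_nsup (fun i j => C i j + ((x j : ℝ) : WithBot ℝ)) i j
      · apply Finset.sup_le; intro i _; apply Finset.sup_le; intro j _
        have h1 : C i j + ((x j : ℝ) : WithBot ℝ) ≤ ((f i : ℝ) : WithBot ℝ) :=
          le_trans (Finset.le_sup (f := fun j => C i j + ((x j : ℝ) : WithBot ℝ))
            (Finset.mem_univ j)) (hx i).1
        have h2 := (wb_shift _ _ _).mp h1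
        have h3 : C i j + ((-(f i) : ℝ) : WithBot ℝ) ≤ ((-(x j) : ℝ) : WithBot ℝ) := by
          rw [wb_shift]
          have he : -(x j) - -(f i) = f i - x j := by ring
          rwa [he]
        exact le_trans h3 (Finset.le_sup (f := fun j => ((-(x j) : ℝ) : WithBot ℝ))
          (Finset.mem_univ j))
  -- upper bound: makespan C x₀ ≤ M
  have hub : makespan C x₀ ≤ M := by
    unfold makespan
    have hT : (Finset.univ.sup fun k => ((-(x₀ k) : ℝ) : WithBot ℝ)) ≤
        ((a : ℝ) : WithBot ℝ) := by
      apply Finset.sup_le; intro k _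
      rw [WithBot.coe_le_coe]
      have : ((-a : ℝ) : WithBot ℝ) ≤ ((x₀ k : ℝ) : WithBot ℝ) := by
        rw [hx₀ k]; exact le_sup_right
      rw [WithBot.coe_le_coe] at this
      linarith
    have hS : (Finset.univ.sup fun i =>
        Finset.univ.sup fun j => C i j + ((x₀ j : ℝ) : WithBot ℝ)) ≤
        ((θ - a : ℝ) : WithBot ℝ) := by
      apply Finset.sup_le; intro i _; apply Finset.sup_le; intro j _
      rw [← wb_shift, hx₀ j]
      rcases le_total (g j) ((-a : ℝ) : WithBot ℝ) with h | h
      · rw [sup_eq_right.mpr h]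
        have hc : C i j + ((-a : ℝ) : WithBot ℝ) + ((a : ℝ) : WithBot ℝ) = C i j := by
          have := wb_cancel (C i j) (-a)
          rwa [neg_neg] at this
        rw [hc, hθ]
        exact le_trans (le_nsup C i j) le_sup_left
      · rw [sup_eq_left.mpr h, hθ]
        calc C i j + g j + ((a : ℝ) : WithBot ℝ) ≤ nCg + ((a : ℝ) : WithBot ℝ) :=
              add_le_add_left (le_nsup (fun i j => C i j + g j) i j) _
          _ = nCg + α := by rw [ha]
          _ ≤ M := le_sup_right
    calc _ ≤ ((θ - a : ℝ) : WithBot ℝ) + ((a : ℝ) : WithBot ℝ) := add_le_add hS hT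
      _ = ((θ : ℝ) : WithBot ℝ) := by rw [← WithBot.coe_add]; norm_num
      _ = M := hθ
  have heq : makespan C x₀ = ((θ : ℝ) : WithBot ℝ) :=
    le_antisymm (hub.trans hθ.ge) (hθ.le.trans (hlow x₀ hfeas))
  refine ⟨θ, hθ, ⟨⟨x₀, hfeas, heq⟩, ?_⟩⟩
  rintro v ⟨x, hx, rfl⟩
  exact hθ.le.trans (hlow x hx)
end

section
/- Let C and D be n×n matrices over ℝ∪{−∞} and let DC denote their max-plus product, (DC)_{ij} = max_{1≤k≤n}(D_{ik} + C_{kj}). Assume Tr(DC) ≤ 0 (every cyclic sequence in DC of length m ≤ n has total weight ≤ 0) and let g ∈ (ℝ∪{−∞})ⁿ. Then the minimum over all x ∈ ℝⁿ satisfying, for every i, max( max_{1≤j≤n}((DC)_{ij} + x_j) , g_i ) ≤ x_i, of F(x) = (max_{1≤i,j≤n}(C_{ij} + x_j)) + (max_{1≤k≤n}(−x_k)), equals θ = max_{1≤i,j≤n}( max_{1≤k≤n}( C_{ik} + ((DC)*)_{kj} ) ), i.e. θ = ‖C(DC)*‖, and this minimum is attained by some feasible x. -/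
namespace MPAux

lemma sup_add_dist {α : Type*} (s : Finset α) (f : α → WithBot ℝ) (c : WithBot ℝ) :
    s.sup f + c = s.sup fun a => f a + c := by
  rcases s.eq_empty_or_nonempty with h | h
  · simp [h]
  · obtain ⟨a, ha, hs⟩ := Finset.exists_mem_eq_sup s h f
    refine le_antisymm ?_ (Finset.sup_le fun b hb => add_le_add (Finset.le_sup hb) le_rfl)
    rw [hs]
    exact Finset.le_sup (f := fun a => f a + c) ha

lemma add_sup_dist {α : Type*} (s : Finset α) (f : α → WithBot ℝ) (c : WithBot ℝ) :
    c + s.sup f = s.sup fun a => c + f a := by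
  rw [add_comm c (s.sup f), sup_add_dist]
  exact Finset.sup_congr rfl fun a _ => add_comm _ _

variable {n : ℕ} (A : Fin n → Fin n → WithBot ℝ)

/-- weight of the path f 0, f 1, ..., f m -/
noncomputable def Wt (f : ℕ → Fin n) (m : ℕ) : WithBot ℝ :=
  ∑ t ∈ Finset.range m, A (f t) (f (t + 1))

lemma path_le (f : ℕ → Fin n) : ∀ m, Wt A f m ≤ mpow A m (f 0) (f m) := by
  intro m
  induction m with
  | zero => simp [Wt, mpow]
  | succ m ih =>
      rw [Wt, Finset.sum_range_succ]
      refine le_trans (add_le_add ih le_rfl) ?_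
      exact Finset.le_sup (f := fun k => mpow A m (f 0) k + A k (f (m + 1))) (Finset.mem_univ (f m))

lemma pow_attain (i : Fin n) : ∀ (m : ℕ) (j : Fin n), mpow A m i j ≠ ⊥ →
    ∃ f : ℕ → Fin n, f 0 = i ∧ f m = j ∧ mpow A m i j ≤ Wt A f m := by
  intro m
  induction m with
  | zero =>
      intro j h
      have hij : i = j := by
        by_contra hne
        exact h (by simp [mpow, hne])
      exact ⟨fun _ => i, rfl, hij ▸ rfl, by simp [Wt, mpow, hij]⟩
  | succ m ih =>
      intro j h
      obtain ⟨k, -, hk⟩ := Finset.exists_mem_eq_sup Finset.univ ⟨i, Finset.mem_univ i⟩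
        (fun k => mpow A m i k + A k j)
      have hk' : mpow A (m + 1) i j = mpow A m i k + A k j := hk
      have hnb : mpow A m i k ≠ ⊥ := by
        intro hb
        exact h (by rw [hk', hb, WithBot.bot_add])
      obtain ⟨f, hf0, hfm, hle⟩ := ih k hnb
      refine ⟨fun u => if u ≤ m then f u else j, by simp [hf0], by simp, ?_⟩
      rw [Wt, Finset.sum_range_succ]
      have h1 : ∑ t ∈ Finset.range m,
          A ((fun u => if u ≤ m then f u else j) t) ((fun u => if u ≤ m then f u else j) (t + 1))
          = Wt A f m := by
        refine Finset.sum_congr rfl fun t ht => ?_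
        have htm := Finset.mem_range.mp ht
        simp [Nat.le_of_lt htm, Nat.succ_le_of_lt htm]
      rw [h1]
      simp only [le_refl, if_pos, Nat.lt_irrefl]
      have h2 : (if m + 1 ≤ m then f (m+1) else j) = j := by simp
      rw [h2, hfm, hk']
      exact add_le_add hle le_rfl

lemma mul_pow_le : ∀ (m : ℕ) (k j l : Fin n), A k j + mpow A m j l ≤ mpow A (m + 1) k l := by
  intro m
  induction m with
  | zero =>
      intro k j l
      by_cases hjl : j = l
      · subst hjl
        have : A k j + mpow A 0 j j = mpow A 0 k k + A k j := by simp [mpow, add_comm]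
        rw [this]
        exact Finset.le_sup (f := fun p => mpow A 0 k p + A p j) (Finset.mem_univ k)
      · simp [mpow, hjl]
  | succ m ih =>
      intro k j l
      show A k j + mpow A (m + 1) j l ≤ mpow A (m + 2) k l
      have hrw : mpow A (m + 1) j l = Finset.univ.sup fun p => mpow A m j p + A p l := rfl
      rw [hrw, add_sup_dist]
      refine Finset.sup_le fun p _ => ?_
      have h1 : A k j + (mpow A m j p + A p l) = (A k j + mpow A m j p) + A p l := by abel
      rw [h1]
      refine le_trans (add_le_add (ih k j p) le_rfl) ?_
      exact Finset.le_sup (f := fun q => mpow A (m + 1) k q + A q l) (Finset.mem_univ p)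

lemma reduce (hTr : ∀ m ∈ Finset.Icc 1 n, ∀ i, mpow A m i i ≤ 0)
    (f : ℕ → Fin n) (s t : ℕ) (hst : s < t) (htn : t ≤ n) (hfe : f s = f t) :
    Wt A f n ≤ mstar A (f 0) (f n) := by
  set c := t - s with hc
  have hsc : s + c = t := by omega
  have hc1 : 1 ≤ c := by omega
  have hcn : c ≤ n := by omega
  have hsnc : s ≤ n - c := by omega
  have hncc : n - c + c = n := by omega
  set g : ℕ → Fin n := fun u => if u < s then f u else f (u + c) with hg
  have hsplit : Wt A f n =
      ((∑ u ∈ Finset.range s, A (f u) (f (u + 1))) +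
        ∑ u ∈ Finset.Ico t n, A (f u) (f (u + 1))) +
      ∑ u ∈ Finset.Ico s t, A (f u) (f (u + 1)) := by
    rw [Wt, Finset.range_eq_Ico,
      ← Finset.sum_Ico_consecutive (fun u => A (f u) (f (u + 1))) (Nat.zero_le t) htn,
      ← Finset.sum_Ico_consecutive (fun u => A (f u) (f (u + 1))) (Nat.zero_le s) (le_of_lt hst),
      ← Finset.range_eq_Ico]
    abel
  have hcyc : ∑ u ∈ Finset.Ico s t, A (f u) (f (u + 1)) ≤ 0 := by
    have h1 : ∑ u ∈ Finset.Ico s t, A (f u) (f (u + 1)) = Wt A (fun u => f (s + u)) c := by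
      rw [Finset.sum_Ico_eq_sum_range, Wt]
      refine Finset.sum_congr rfl fun u _ => ?_
      have : s + (u + 1) = s + u + 1 := by omega
      rw [this]
    rw [h1]
    refine le_trans (path_le A _ c) ?_
    rw [Nat.add_zero, hsc, ← hfe]
    exact hTr c (Finset.mem_Icc.mpr ⟨hc1, hcn⟩) (f s)
  have hgw : Wt A g (n - c) =
      (∑ u ∈ Finset.range s, A (f u) (f (u + 1))) +
        ∑ u ∈ Finset.Ico t n, A (f u) (f (u + 1)) := by
    rw [Wt, Finset.range_eq_Ico,
      ← Finset.sum_Ico_consecutive (fun u => A (g u) (g (u + 1))) (Nat.zero_le s) hsnc,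
      ← Finset.range_eq_Ico]
    congr 1
    · refine Finset.sum_congr rfl fun u hu => ?_
      have hus := Finset.mem_range.mp hu
      have hgu : g u = f u := by simp [hg, hus]
      have hgu1 : g (u + 1) = f (u + 1) := by
        by_cases h : u + 1 < s
        · simp [hg, h]
        · have hu1 : u + 1 = s := by omega
          have ht' : u + 1 + c = t := by omega
          show (if u + 1 < s then f (u + 1) else f (u + 1 + c)) = f (u + 1)
          rw [if_neg h, ht', ← hfe, hu1]
      rw [hgu, hgu1]
    · rw [Finset.sum_Ico_eq_sum_range, Finset.sum_Ico_eq_sum_range]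
      have hnn : n - c - s = n - t := by omega
      rw [hnn]
      refine Finset.sum_congr rfl fun u _ => ?_
      have hg1 : g (s + u) = f (t + u) := by
        have h1 : ¬ s + u < s := by omega
        have h2 : s + u + c = t + u := by omega
        simp [hg, h1, h2]
      have hg2 : g (s + u + 1) = f (t + u + 1) := by
        have h1 : ¬ s + u + 1 < s := by omega
        have h2 : s + u + 1 + c = t + u + 1 := by omega
        simp [hg, h1, h2]
      rw [hg1, hg2]
  have hend : Wt A f n ≤ Wt A g (n - c) := by
    rw [hsplit, hgw]
    calc ((∑ u ∈ Finset.range s, A (f u) (f (u + 1))) +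
        ∑ u ∈ Finset.Ico t n, A (f u) (f (u + 1))) + ∑ u ∈ Finset.Ico s t, A (f u) (f (u + 1))
        ≤ ((∑ u ∈ Finset.range s, A (f u) (f (u + 1))) +
          ∑ u ∈ Finset.Ico t n, A (f u) (f (u + 1))) + 0 := add_le_add le_rfl hcyc
      _ = _ := add_zero _
  refine le_trans hend ?_
  refine le_trans (path_le A g (n - c)) ?_
  have hg0 : g 0 = f 0 := by
    by_cases h : 0 < s
    · simp [hg, h]
    · have hs0 : s = 0 := by omega
      have h0c : (0 : ℕ) + c = t := by omega
      simp only [hg, if_neg (by omega : ¬ (0 : ℕ) < s)]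
      rw [h0c, ← hfe, hs0]
  have hgn : g (n - c) = f n := by
    have h1 : ¬ n - c < s := by omega
    simp [hg, h1, hncc]
  rw [hg0, hgn]
  exact Finset.le_sup (f := fun m => mpow A m (f 0) (f n)) (Finset.mem_range.mpr (by omega))

lemma pow_le_star (hTr : ∀ m ∈ Finset.Icc 1 n, ∀ i, mpow A m i i ≤ 0) (i j : Fin n) :
    mpow A n i j ≤ mstar A i j := by
  by_cases hb : mpow A n i j = ⊥
  · rw [hb]; exact bot_le
  obtain ⟨f, hf0, hfn, hle⟩ := pow_attain A i n j hb
  obtain ⟨a, b, hne, hab⟩ :=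
    Fintype.exists_ne_map_eq_of_card_lt (fun t : Fin (n + 1) => f t) (by simp)
  refine le_trans hle ?_
  rw [← hf0, ← hfn]
  rcases lt_or_gt_of_ne hne with h | h
  · exact reduce A hTr f a b h (Nat.lt_succ_iff.mp b.isLt) hab
  · exact reduce A hTr f b a h (Nat.lt_succ_iff.mp a.isLt) hab.symm

lemma theta_le_makespan (C : Fin n → Fin n → WithBot ℝ) (x : Fin n → ℝ)
    (hA : ∀ i j, A i j + ((x j : ℝ) : WithBot ℝ) ≤ ((x i : ℝ) : WithBot ℝ)) :
    (Finset.univ.sup fun i => Finset.univ.sup fun j => Finset.univ.sup fun k =>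
        C i k + mstar A k j) ≤ makespan C x := by
  have hpow : ∀ (m : ℕ) (i j : Fin n), mpow A m i j + ((x j : ℝ) : WithBot ℝ) ≤
      ((x i : ℝ) : WithBot ℝ) := by
    intro m
    induction m with
    | zero =>
        intro i j
        by_cases h : i = j
        · subst h; simp [mpow]
        · simp [mpow, h]
    | succ m ih =>
        intro i j
        show (Finset.univ.sup fun k => mpow A m i k + A k j) + ((x j : ℝ) : WithBot ℝ) ≤ _
        rw [sup_add_dist]
        refine Finset.sup_le fun k _ => ?_
        have h1 : mpow A m i k + A k j + ((x j : ℝ) : WithBot ℝ) =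
            mpow A m i k + (A k j + ((x j : ℝ) : WithBot ℝ)) := add_assoc _ _ _
        rw [h1]
        exact le_trans (add_le_add le_rfl (hA k j)) (ih i k)
  have hstar : ∀ k j, mstar A k j + ((x j : ℝ) : WithBot ℝ) ≤ ((x k : ℝ) : WithBot ℝ) := by
    intro k j
    show ((Finset.range n).sup fun m => mpow A m k j) + _ ≤ _
    rw [sup_add_dist]
    exact Finset.sup_le fun m _ => hpow m k j
  refine Finset.sup_le fun i _ => Finset.sup_le fun j _ => Finset.sup_le fun k _ => ?_
  have h0 : ((x j : ℝ) : WithBot ℝ) + ((-(x j) : ℝ) : WithBot ℝ) = 0 := by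
    rw [← WithBot.coe_add]; norm_num
  have key : C i k + mstar A k j =
      (C i k + (mstar A k j + ((x j : ℝ) : WithBot ℝ))) + ((-(x j) : ℝ) : WithBot ℝ) := by
    calc C i k + mstar A k j
        = C i k + mstar A k j + (((x j : ℝ) : WithBot ℝ) + ((-(x j) : ℝ) : WithBot ℝ)) := by
          rw [h0, add_zero]
      _ = _ := by abel
  rw [key]
  refine le_trans (add_le_add (add_le_add le_rfl (hstar k j)) le_rfl) ?_
  simp only [makespan]
  refine add_le_add ?_ (Finset.le_sup (f := fun k => ((-(x k) : ℝ) : WithBot ℝ)) (Finset.mem_univ j))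
  refine le_trans (Finset.le_sup (f := fun j' => C i j' + ((x j' : ℝ) : WithBot ℝ))
    (Finset.mem_univ k)) ?_
  exact Finset.le_sup
    (f := fun i' => Finset.univ.sup fun j' => C i' j' + ((x j' : ℝ) : WithBot ℝ))
    (Finset.mem_univ i)

end MPAux

/-- Scheduling under finish-start (DCx ≤ x) and early-start (g ≤ x) constraints:
the minimum makespan equals θ = ‖C(DC)*‖ = max_{i,j,k}(C_{ik} + ((DC)*)_{kj}),
and it is attained by some feasible x. -/
theorem stmt_12 {n : ℕ} (C D : Fin n → Fin n → WithBot ℝ) (g : Fin n → WithBot ℝ)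
    (hTr : ∀ m ∈ Finset.Icc 1 n, ∀ i, mpow (mmul D C) m i i ≤ 0) :
    IsLeast
      {v | ∃ x : Fin n → ℝ,
        (∀ i, (Finset.univ.sup fun j => mmul D C i j + ((x j : ℝ) : WithBot ℝ)) ⊔ g i ≤
          ((x i : ℝ) : WithBot ℝ)) ∧
        makespan C x = v}
      (Finset.univ.sup fun i => Finset.univ.sup fun j => Finset.univ.sup fun k =>
        C i k + mstar (mmul D C) k j) := by
  classical
  set A := mmul D C with hAdef
  constructor
  · -- membership
    rcases Nat.eq_zero_or_pos n with hn | hn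
    · subst hn
      refine ⟨fun i => i.elim0, fun i => i.elim0, ?_⟩
      simp [makespan]
    · haveI : Nonempty (Fin n) := ⟨⟨0, hn⟩⟩
      have hy0 : ∀ k : Fin n, (0 : WithBot ℝ) ≤ Finset.univ.sup fun j => mstar A k j := by
        intro k
        refine le_trans ?_ (Finset.le_sup (f := fun j => mstar A k j) (Finset.mem_univ k))
        refine le_trans ?_ (Finset.le_sup (f := fun m => mpow A m k k) (Finset.mem_range.mpr hn))
        simp [mpow]
      have hy : ∀ k : Fin n, ∃ r : ℝ, (Finset.univ.sup fun j => mstar A k j) = (r : WithBot ℝ) := by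
        intro k
        cases h : (Finset.univ.sup fun j => mstar A k j) with
        | bot =>
            have := hy0 k
            rw [h] at this
            exact absurd this (by simp)
        | coe r => exact ⟨r, rfl⟩
      choose x0 hx0 using hy
      have hx0nn : ∀ k, (0 : ℝ) ≤ x0 k := by
        intro k
        have := hy0 k
        rw [hx0 k] at this
        exact_mod_cast this
      set lam : ℝ :=
        0 ⊔ Finset.univ.sup' Finset.univ_nonempty (fun i => WithBot.unbotD 0 (g i) - x0 i) with hlam
      have hlam0 : (0 : ℝ) ≤ lam := le_sup_left
      set x : Fin n → ℝ := fun k => x0 k + lam with hxdef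
      have hglam : ∀ i, g i ≤ ((x i : ℝ) : WithBot ℝ) := by
        intro i
        cases hgi : g i with
        | bot => exact bot_le
        | coe r =>
            have h1 : r - x0 i ≤ lam := by
              refine le_trans ?_ le_sup_right
              have := Finset.le_sup' (fun i => WithBot.unbotD 0 (g i) - x0 i) (Finset.mem_univ i)
              rw [hgi] at this
              simpa only [WithBot.unbotD_coe] using this
            have : r ≤ x i := by simp only [hxdef]; linarith
            exact_mod_cast this
      have hfeasA : ∀ i j, A i j + ((x j : ℝ) : WithBot ℝ) ≤ ((x i : ℝ) : WithBot ℝ) := by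
        intro i j
        have hstep : A i j + ((x0 j : ℝ) : WithBot ℝ) ≤ ((x0 i : ℝ) : WithBot ℝ) := by
          rw [← hx0 i, ← hx0 j, MPAux.add_sup_dist]
          refine Finset.sup_le fun l _ => ?_
          have hkey : A i j + mstar A j l ≤ mstar A i l := by
            show A i j + ((Finset.range n).sup fun m => mpow A m j l) ≤ _
            rw [MPAux.add_sup_dist]
            refine Finset.sup_le fun m hm => ?_
            have hm' := Finset.mem_range.mp hm
            refine le_trans (MPAux.mul_pow_le A m i j l) ?_
            rcases Nat.lt_or_ge (m + 1) n with h | h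
            · exact Finset.le_sup (f := fun m => mpow A m i l) (Finset.mem_range.mpr h)
            · have hmn : m + 1 = n := by omega
              rw [hmn]
              exact MPAux.pow_le_star A hTr i l
          exact le_trans hkey (Finset.le_sup (f := fun l => mstar A i l) (Finset.mem_univ l))
        show A i j + ((x0 j + lam : ℝ) : WithBot ℝ) ≤ ((x0 i + lam : ℝ) : WithBot ℝ)
        rw [WithBot.coe_add, WithBot.coe_add, ← add_assoc]
        exact add_le_add hstep le_rfl
      refine ⟨x, fun i => sup_le (Finset.sup_le fun j _ => hfeasA i j) (hglam i), ?_⟩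
      refine le_antisymm ?_ (MPAux.theta_le_makespan A C x hfeasA)
      -- upper bound: makespan C x ≤ θ
      simp only [makespan]
      have hT2 : (Finset.univ.sup fun k => ((-(x k) : ℝ) : WithBot ℝ)) ≤
          ((-lam : ℝ) : WithBot ℝ) := by
        refine Finset.sup_le fun k _ => ?_
        have : -(x k) ≤ -lam := by simp only [hxdef]; linarith [hx0nn k]
        exact_mod_cast this
      have hT1 : (Finset.univ.sup fun i => Finset.univ.sup fun j =>
            C i j + ((x j : ℝ) : WithBot ℝ)) ≤
          (Finset.univ.sup fun i => Finset.univ.sup fun j => Finset.univ.sup fun k =>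
            C i k + mstar A k j) + ((lam : ℝ) : WithBot ℝ) := by
        refine Finset.sup_le fun i _ => Finset.sup_le fun j _ => ?_
        have h1 : C i j + ((x j : ℝ) : WithBot ℝ) =
            (C i j + ((x0 j : ℝ) : WithBot ℝ)) + ((lam : ℝ) : WithBot ℝ) := by
          show C i j + ((x0 j + lam : ℝ) : WithBot ℝ) = _
          rw [WithBot.coe_add, ← add_assoc]
        rw [h1]
        refine add_le_add ?_ le_rfl
        rw [← hx0 j, MPAux.add_sup_dist]
        refine Finset.sup_le fun l _ => ?_
        refine le_trans (Finset.le_sup (f := fun k => C i k + mstar A k l)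
          (Finset.mem_univ j)) ?_
        refine le_trans (Finset.le_sup
          (f := fun j' => Finset.univ.sup fun k => C i k + mstar A k j') (Finset.mem_univ l)) ?_
        exact Finset.le_sup
          (f := fun i' => Finset.univ.sup fun j' => Finset.univ.sup fun k =>
            C i' k + mstar A k j') (Finset.mem_univ i)
      refine le_trans (add_le_add hT1 hT2) ?_
      rw [add_assoc, ← WithBot.coe_add]
      norm_num
  · -- lower bound
    rintro v ⟨x, hfeas, rfl⟩
    refine MPAux.theta_le_makespan A C x fun i j => ?_
    refine le_trans ?_ (le_trans le_sup_left (hfeas i))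
    exact Finset.le_sup (f := fun j => A i j + ((x j : ℝ) : WithBot ℝ)) (Finset.mem_univ j)
end
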